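/- arXiv:0904.1551 — 6 statements merged into one kernel-verified Lean document; each statement's English description precedes it below -/
import Mathlib

section
/- Let σ = (σ_0,…,σ_n) be a binary Markov chain as in the context, and for t = 1,…,n let ℓ_t : ℝ × {0,1} → ℝ be such that ε ↦ ℓ_t(ε,a) is twice differentiable for a = 0,1, with ℓ_t(0,1) = ℓ_t(0,0). Define d_t(ε) = ℓ_t(ε,1) − ℓ_t(ε,0), S_n(ε) = Σ_{t=1}^n ℓ_t(ε,σ_t), λ_n(ε) = ln E[e^{S_n(ε)} | σ_0 = 1] − ln E[e^{S_n(ε)} | σ_0 = 0], and for 1 ≤ s < t ≤ n, u_{st} = D_{0s}[D_{st}P_{0s}(0,0) − D_{0t}] d_s'(0) + D_{0s}D_{st} ℓ_s'(0,0) − D_{0t} E[ℓ_s'(0,σ_s) | σ_0 = 0], where ℓ_s'(0,a) denotes the ε-derivative of ℓ_s(·,a) at 0. Then λ_n''(0) = Σ_{t=1}^n D_{0t}{ d_t''(0) + [P_{0t}(1,0) − P_{0t}(0,1)] [d_t'(0)]^2 } + 2 Σ_{t=1}^n d_t'(0) Σ_{s=1}^{t−1} u_{st}. -/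
/-- The weight `π(v₀) ∏_{t=1}^n Q_t(v_{t−1}, v_t)` of a path `v` of a (possibly
time-inhomogeneous) binary Markov chain `σ₀, …, σ_n` with initial law `π` and one-step
transition matrices `Q_t`. -/
noncomputable def pathWeight (n : ℕ) (π : Fin 2 → ℝ) (Q : ℕ → Fin 2 → Fin 2 → ℝ)
    (v : Fin (n + 1) → Fin 2) : ℝ :=
  π (v 0) * ∏ t : Fin n, Q (t.1 + 1) (v t.castSucc) (v t.succ)

/-- The conditional expectation `E[F(σ) | σ_s = a]`, a finite weighted sum over paths
with `σ_s = a`. -/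
noncomputable def condExp' (n : ℕ) (π : Fin 2 → ℝ) (Q : ℕ → Fin 2 → Fin 2 → ℝ)
    (s : Fin (n + 1)) (a : Fin 2) (F : (Fin (n + 1) → Fin 2) → ℝ) : ℝ :=
  (∑ v : Fin (n + 1) → Fin 2, if v s = a then pathWeight n π Q v * F v else 0) /
    (∑ v : Fin (n + 1) → Fin 2, if v s = a then pathWeight n π Q v else 0)

/-- The conditional probability `P_{st}(a,b) = P(σ_t = b | σ_s = a)`. -/
noncomputable def condProb (n : ℕ) (π : Fin 2 → ℝ) (Q : ℕ → Fin 2 → Fin 2 → ℝ)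
    (s t : Fin (n + 1)) (a b : Fin 2) : ℝ :=
  condExp' n π Q s a fun v => if v t = b then 1 else 0

/-- `D_{st} = P_{st}(1,1) − P_{st}(0,1)`. -/
noncomputable def Dst (n : ℕ) (π : Fin 2 → ℝ) (Q : ℕ → Fin 2 → Fin 2 → ℝ)
    (s t : Fin (n + 1)) : ℝ :=
  condProb n π Q s t 1 1 - condProb n π Q s t 0 1

open Finset

/-- product of transition matrices `B (s+1) ⋯ B (s+k)` -/
noncomputable def Pm (B : ℕ → Fin 2 → Fin 2 → ℝ) (s : ℕ) : ℕ → Fin 2 → Fin 2 → ℝ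
  | 0 => fun a b => if a = b then 1 else 0
  | k+1 => fun a b => ∑ c, Pm B s k a c * B (s+k+1) c b

lemma Pm_rowsum {Q : ℕ → Fin 2 → Fin 2 → ℝ} (hQrow : ∀ t a, Q t a 0 + Q t a 1 = 1)
    (s k : ℕ) (a : Fin 2) : ∑ b, Pm Q s k a b = 1 := by
  induction k with
  | zero => fin_cases a <;> simp [Pm, Fin.sum_univ_two]
  | succ k ih =>
    have : ∀ c : Fin 2, ∑ b, Q (s+k+1) c b = 1 := by
      intro c; rw [Fin.sum_univ_two]; exact hQrow _ _
    simp only [Pm]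
    rw [Finset.sum_comm]
    calc ∑ c, ∑ b, Pm Q s k a c * Q (s+k+1) c b
        = ∑ c, Pm Q s k a c * ∑ b, Q (s+k+1) c b := by
          simp [Finset.mul_sum, Fin.sum_univ_two]; ring
      _ = ∑ c, Pm Q s k a c := by simp [this]
      _ = 1 := ih

lemma Pm_nonneg {Q : ℕ → Fin 2 → Fin 2 → ℝ} (hQpos : ∀ t a b, 0 < Q t a b)
    (s k : ℕ) (a b : Fin 2) : 0 ≤ Pm Q s k a b := by
  induction k generalizing b with
  | zero => simp only [Pm]; split <;> norm_num
  | succ k ih =>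
    simp only [Pm]
    exact Finset.sum_nonneg fun c _ => mul_nonneg (ih c) (hQpos _ _ _).le

lemma Pm_pos {Q : ℕ → Fin 2 → Fin 2 → ℝ} (hQpos : ∀ t a b, 0 < Q t a b)
    (hQrow : ∀ t a, Q t a 0 + Q t a 1 = 1)
    (s k : ℕ) (hk : 0 < k) (a b : Fin 2) : 0 < Pm Q s k a b := by
  obtain ⟨k, rfl⟩ : ∃ k', k = k' + 1 := ⟨k - 1, by omega⟩
  simp only [Pm]
  have h1 : ∀ c : Fin 2, 0 ≤ Pm Q s k a c * Q (s+k+1) c b :=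
    fun c => mul_nonneg (Pm_nonneg hQpos s k a c) (hQpos _ _ _).le
  have h2 : ∃ c : Fin 2, 0 < Pm Q s k a c := by
    by_contra h
    push_neg at h
    have : ∀ c : Fin 2, Pm Q s k a c = 0 :=
      fun c => le_antisymm (h c) (Pm_nonneg hQpos s k a c)
    have hsum := Pm_rowsum hQrow s k a
    rw [Fin.sum_univ_two, this 0, this 1] at hsum
    norm_num at hsum
  obtain ⟨c, hc⟩ := h2
  exact Finset.sum_pos' (fun c _ => h1 c)
    ⟨c, Finset.mem_univ c, mul_pos hc (hQpos _ _ _)⟩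

lemma Pm_chapman (Q : ℕ → Fin 2 → Fin 2 → ℝ) (s j k : ℕ) (a b : Fin 2) :
    Pm Q s (j+k) a b = ∑ c, Pm Q s j a c * Pm Q (s+j) k c b := by
  induction k generalizing b with
  | zero => simp [Pm, Finset.sum_ite_eq', mul_ite]
  | succ k ih =>
    have harith : s + (j + k) + 1 = (s + j) + k + 1 := by omega
    show Pm Q s ((j+k)+1) a b = _
    simp only [Pm, harith]
    calc ∑ c, Pm Q s (j+k) a c * Q (s+j+k+1) c b
        = ∑ c, (∑ c', Pm Q s j a c' * Pm Q (s+j) k c' c) * Q (s+j+k+1) c b := by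
          simp only [ih]
      _ = ∑ c', Pm Q s j a c' * ∑ c, Pm Q (s+j) k c' c * Q (s+j+k+1) c b := by
          simp only [Finset.sum_mul, Finset.mul_sum, mul_assoc]
          rw [Finset.sum_comm]

/-- insert a factor `g (v m)` into transition matrix at step `m` -/
noncomputable def ins (B : ℕ → Fin 2 → Fin 2 → ℝ) (m : ℕ) (g : Fin 2 → ℝ) :
    ℕ → Fin 2 → Fin 2 → ℝ :=
  fun k x y => B k x y * (if k = m then g y else 1)

lemma Pm_ins_out (B : ℕ → Fin 2 → Fin 2 → ℝ) (m : ℕ) (g : Fin 2 → ℝ) (s k : ℕ)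
    (h : m ≤ s ∨ s + k < m) : Pm (ins B m g) s k = Pm B s k := by
  induction k with
  | zero => rfl
  | succ k ih =>
    have h1 : m ≤ s ∨ s + k < m := by omega
    have h2 : s + k + 1 ≠ m := by omega
    funext a b
    simp only [Pm, ih h1, ins, if_neg h2, mul_one]

lemma Pm_ins_last (B : ℕ → Fin 2 → Fin 2 → ℝ) (g : Fin 2 → ℝ) (s k : ℕ)
    (a b : Fin 2) : Pm (ins B (s+k+1) g) s (k+1) a b = Pm B s (k+1) a b * g b := by
  have h1 : Pm (ins B (s+k+1) g) s k = Pm B s k :=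
    Pm_ins_out B (s+k+1) g s k (by omega)
  simp only [Pm, h1, ins, Finset.sum_mul]
  exact Finset.sum_congr rfl fun c _ => by simp; ring

lemma Pm_ins_mid (B : ℕ → Fin 2 → Fin 2 → ℝ) (g : Fin 2 → ℝ) (s j k : ℕ)
    (hj : 0 < j) (a b : Fin 2) :
    Pm (ins B (s+j) g) s (j+k) a b
      = ∑ c, Pm B s j a c * g c * Pm B (s+j) k c b := by
  rw [Pm_chapman]
  refine Finset.sum_congr rfl fun c _ => ?_
  rw [Pm_ins_out B (s+j) g (s+j) k (by omega)]
  obtain ⟨j', rfl⟩ : ∃ j', j = j' + 1 := ⟨j - 1, by omega⟩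
  rw [show s + (j' + 1) = s + j' + 1 from rfl, Pm_ins_last]

/-- master factorization of path sums -/
lemma path_sum (B : ℕ → Fin 2 → Fin 2 → ℝ) (n : ℕ) (A C : Fin 2 → ℝ) :
    ∑ v : Fin (n+1) → Fin 2,
        A (v 0) * (∏ t : Fin n, B (t.1 + 1) (v t.castSucc) (v t.succ)) * C (v (Fin.last n))
      = ∑ a, ∑ b, A a * Pm B 0 n a b * C b := by
  induction n generalizing C with
  | zero =>
    rw [← Equiv.sum_comp (Equiv.funUnique (Fin 1) (Fin 2)).symm]
    simp [Pm, Fin.sum_univ_two, Fin.last]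
  | succ n ih =>
    rw [← Equiv.sum_comp ((Fin.insertNthEquiv (fun _ => Fin 2) (Fin.last (n+1))).symm).symm]
    rw [Fintype.sum_prod_type]
    have key : ∀ (b : Fin 2) (w : Fin (n+1) → Fin 2),
        (((Fin.insertNthEquiv (fun _ => Fin 2) (Fin.last (n+1))).symm).symm (b, w)) =
          Fin.snoc w b := by
      intro b w
      funext i
      simp [Fin.insertNthEquiv, Fin.insertNth_last]
    calc ∑ b, ∑ w : Fin (n+1) → Fin 2,
            (fun v => A (v 0) * (∏ t : Fin (n+1), B (t.1 + 1) (v t.castSucc) (v t.succ))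
              * C (v (Fin.last (n+1))))
            (((Fin.insertNthEquiv (fun _ => Fin 2) (Fin.last (n+1))).symm).symm (b, w))
        = ∑ b, ∑ w : Fin (n+1) → Fin 2,
            A (w 0) * (∏ t : Fin n, B (t.1 + 1) (w t.castSucc) (w t.succ))
              * (B (n+1) (w (Fin.last n)) b * C b) := by
          refine Finset.sum_congr rfl fun b _ => Finset.sum_congr rfl fun w _ => ?_
          simp only [key]
          rw [Fin.prod_univ_castSucc]
          have e0 : (Fin.snoc w b : Fin (n+2) → Fin 2) 0 = w 0 := by
            rw [show (0 : Fin (n+2)) = Fin.castSucc 0 from rfl, Fin.snoc_castSucc]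
          have elast : (Fin.snoc w b : Fin (n+2) → Fin 2) (Fin.last (n+1)) = b :=
            Fin.snoc_last _ _
          have eprod : ∀ t : Fin n,
              B ((Fin.castSucc t).1 + 1) ((Fin.snoc w b : Fin (n+2) → Fin 2) (Fin.castSucc t).castSucc)
                ((Fin.snoc w b : Fin (n+2) → Fin 2) (Fin.castSucc t).succ)
              = B (t.1 + 1) (w t.castSucc) (w t.succ) := by
            intro t
            rw [Fin.succ_castSucc, Fin.snoc_castSucc, Fin.snoc_castSucc]
            rfl
          have eN : ((Fin.snoc w b : Fin (n+2) → Fin 2) (Fin.castSucc (Fin.last n)),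
                     (Fin.snoc w b : Fin (n+2) → Fin 2) (Fin.succ (Fin.last n)))
                  = (w (Fin.last n), b) := by
            rw [Fin.snoc_castSucc, Fin.succ_last, Fin.snoc_last]
          simp only [Finset.prod_congr rfl (fun t _ => eprod t), e0, elast]
          have e1 : (Fin.snoc w b : Fin (n+2) → Fin 2) (Fin.castSucc (Fin.last n)) = w (Fin.last n) :=
            Fin.snoc_castSucc _ _ _
          have e2 : (Fin.snoc w b : Fin (n+2) → Fin 2) (Fin.succ (Fin.last n)) = b := by
            rw [Fin.succ_last, Fin.snoc_last]
          rw [show ((Fin.last n).castSucc : Fin (n+2)) = Fin.castSucc (Fin.last n) from rfl]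
          rw [e1]
          rw [show ((Fin.last n).succ : Fin (n+2)) = Fin.succ (Fin.last n) from rfl, e2]
          simp only [Fin.val_last]
          ring
      _ = ∑ b, ∑ a, ∑ c, A a * Pm B 0 n a c * (B (n+1) c b * C b) := by
          exact Finset.sum_congr rfl fun b _ => ih (fun x => B (n+1) x b * C b)
      _ = ∑ a, ∑ b, A a * Pm B 0 (n+1) a b * C b := by
          rw [Finset.sum_comm]
          refine Finset.sum_congr rfl fun a _ => ?_
          simp only [Pm, show 0 + n + 1 = n + 1 by omega, Finset.sum_mul, Finset.mul_sum]
          exact Finset.sum_congr rfl fun b _ => Finset.sum_congr rfl fun c _ => by ring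

lemma Pm_ins_mid' (B : ℕ → Fin 2 → Fin 2 → ℝ) (g : Fin 2 → ℝ) (j k m : ℕ)
    (hj : 0 < j) (hm : m = j + k) (a b : Fin 2) :
    Pm (ins B j g) 0 m a b = ∑ c, Pm B 0 j a c * g c * Pm B j k c b := by
  subst hm
  have := Pm_ins_mid B g 0 j k hj a b
  simpa using this

lemma Pm_ins2 (B : ℕ → Fin 2 → Fin 2 → ℝ) (g h : Fin 2 → ℝ) (j m2 k l m : ℕ)
    (hj : 0 < j) (hk : 0 < k) (hm2 : m2 = j + k) (hm : m = m2 + l) (a b : Fin 2) :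
    Pm (ins (ins B j g) m2 h) 0 m a b
      = ∑ c, ∑ d, Pm B 0 j a c * g c * Pm B j k c d * h d * Pm B m2 l d b := by
  subst hm2
  conv_rhs => rw [Finset.sum_comm]
  rw [Pm_ins_mid' (ins B j g) h (j+k) l m (by omega) (by omega) a b]
  refine Finset.sum_congr rfl fun d _ => ?_
  rw [Pm_ins_out B j g (j+k) l (by omega)]
  rw [Pm_ins_mid' B g j k (j+k) hj rfl a d]
  rw [Finset.sum_mul, Finset.sum_mul]

lemma prod_ins_one {n : ℕ} (B : ℕ → Fin 2 → Fin 2 → ℝ) (m : ℕ) (g : Fin 2 → ℝ)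
    (v : Fin (n+1) → Fin 2) (t : Fin n) (hm : m = t.1 + 1) :
    ∏ u : Fin n, ins B m g (u.1 + 1) (v u.castSucc) (v u.succ)
      = (∏ u : Fin n, B (u.1 + 1) (v u.castSucc) (v u.succ)) * g (v t.succ) := by
  subst hm
  simp only [ins]
  rw [Finset.prod_mul_distrib]
  congr 1
  calc ∏ u : Fin n, (if u.1 + 1 = t.1 + 1 then g (v u.succ) else 1)
      = ∏ u : Fin n, (if u = t then g (v u.succ) else 1) := by
        refine Finset.prod_congr rfl fun u _ => ?_
        congr 1
        simp [Fin.ext_iff]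
    _ = g (v t.succ) := by simp

lemma rowCollapse {Q : ℕ → Fin 2 → Fin 2 → ℝ} (hQrow : ∀ t a, Q t a 0 + Q t a 1 = 1)
    (j k : ℕ) (F : Fin 2 → ℝ) :
    ∑ b, ∑ c, F c * Pm Q j k c b = ∑ c, F c := by
  rw [Finset.sum_comm]
  refine Finset.sum_congr rfl fun c _ => ?_
  rw [← Finset.mul_sum, Pm_rowsum hQrow, mul_one]

section Elem

variable (n : ℕ) (π : Fin 2 → ℝ) (Q : ℕ → Fin 2 → Fin 2 → ℝ)
variable (hQrow : ∀ t a, Q t a 0 + Q t a 1 = 1)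

include hQrow

lemma sum_den (a : Fin 2) :
    ∑ v : Fin (n+1) → Fin 2, (if v 0 = a then pathWeight n π Q v else 0) = π a := by
  have h : ∀ v : Fin (n+1) → Fin 2,
      (if v 0 = a then pathWeight n π Q v else 0)
        = (if v 0 = a then π (v 0) else 0) *
            (∏ t : Fin n, Q (t.1 + 1) (v t.castSucc) (v t.succ)) *
            (fun _ : Fin 2 => (1:ℝ)) (v (Fin.last n)) := by
    intro v; by_cases hv : v 0 = a <;> simp [pathWeight, hv]
  rw [Finset.sum_congr rfl fun v _ => h v,
    path_sum Q n (fun x => if x = a then π x else 0) (fun _ => 1)]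
  simp only [mul_one, ite_mul, zero_mul]
  have hx : ∀ x : Fin 2, (∑ b : Fin 2, if x = a then π x * Pm Q 0 n x b else 0)
      = if x = a then π x else 0 := by
    intro x
    split
    · rw [← Finset.mul_sum, Pm_rowsum hQrow, mul_one]
    · simp
  rw [Finset.sum_congr rfl fun x _ => hx x]
  simp

lemma sum_site (a : Fin 2) (t : Fin n) (g : Fin 2 → ℝ) :
    ∑ v : Fin (n+1) → Fin 2, (if v 0 = a then pathWeight n π Q v * g (v t.succ) else 0)
      = π a * ∑ b, Pm Q 0 (t.1+1) a b * g b := by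
  have h : ∀ v : Fin (n+1) → Fin 2,
      (if v 0 = a then pathWeight n π Q v * g (v t.succ) else 0)
        = (if v 0 = a then π (v 0) else 0) *
            (∏ u : Fin n, ins Q (t.1+1) g (u.1 + 1) (v u.castSucc) (v u.succ)) *
            (fun _ : Fin 2 => (1:ℝ)) (v (Fin.last n)) := by
    intro v
    rw [prod_ins_one Q (t.1+1) g v t rfl]
    by_cases hv : v 0 = a <;> simp [pathWeight, hv] <;> ring
  rw [Finset.sum_congr rfl fun v _ => h v,
    path_sum (ins Q (t.1+1) g) n (fun x => if x = a then π x else 0) (fun _ => 1)]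
  simp only [mul_one,
    Pm_ins_mid' Q g (t.1+1) (n - (t.1+1)) n (by omega) (by omega : n = (t.1+1) + (n - (t.1+1)))]
  rw [Finset.sum_comm]
  simp only [ite_mul, zero_mul, Finset.sum_ite_eq', Finset.mem_univ, if_true]
  rw [← Finset.mul_sum]
  congr 1
  exact rowCollapse hQrow (t.1+1) (n - (t.1+1)) _

lemma sum_site2 (a : Fin 2) (s t : Fin n) (hst : s.1 < t.1) (g h : Fin 2 → ℝ) :
    ∑ v : Fin (n+1) → Fin 2,
        (if v 0 = a then pathWeight n π Q v * (g (v s.succ) * h (v t.succ)) else 0)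
      = π a * ∑ b, ∑ c, Pm Q 0 (s.1+1) a b * g b * Pm Q (s.1+1) (t.1-s.1) b c * h c := by
  have hp : ∀ v : Fin (n+1) → Fin 2,
      (if v 0 = a then pathWeight n π Q v * (g (v s.succ) * h (v t.succ)) else 0)
        = (if v 0 = a then π (v 0) else 0) *
            (∏ u : Fin n, ins (ins Q (s.1+1) g) (t.1+1) h (u.1 + 1) (v u.castSucc) (v u.succ)) *
            (fun _ : Fin 2 => (1:ℝ)) (v (Fin.last n)) := by
    intro v
    rw [prod_ins_one (ins Q (s.1+1) g) (t.1+1) h v t rfl,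
      prod_ins_one Q (s.1+1) g v s rfl]
    by_cases hv : v 0 = a <;> simp [pathWeight, hv] <;> ring
  rw [Finset.sum_congr rfl fun v _ => hp v,
    path_sum (ins (ins Q (s.1+1) g) (t.1+1) h) n (fun x => if x = a then π x else 0)
      (fun _ => 1)]
  simp only [mul_one,
    Pm_ins2 Q g h (s.1+1) (t.1+1) (t.1-s.1) (n - (t.1+1)) n (by omega) (by omega)
      (by omega) (by omega)]
  rw [Finset.sum_comm]
  simp only [ite_mul, zero_mul, Finset.sum_ite_eq', Finset.mem_univ, if_true]
  rw [← Finset.mul_sum]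
  congr 1
  rw [Finset.sum_comm]
  refine Finset.sum_congr rfl fun b _ => ?_
  exact rowCollapse hQrow (t.1+1) (n - (t.1+1)) _

lemma sum_den_mid (a : Fin 2) (s : Fin n) :
    ∑ v : Fin (n+1) → Fin 2, (if v s.succ = a then pathWeight n π Q v else 0)
      = ∑ x, π x * Pm Q 0 (s.1+1) x a := by
  have h : ∀ v : Fin (n+1) → Fin 2,
      (if v s.succ = a then pathWeight n π Q v else 0)
        = π (v 0) *
            (∏ u : Fin n, ins Q (s.1+1) (fun y => if y = a then 1 else 0) (u.1 + 1)
              (v u.castSucc) (v u.succ)) *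
            (fun _ : Fin 2 => (1:ℝ)) (v (Fin.last n)) := by
    intro v
    rw [prod_ins_one Q (s.1+1) (fun y => if y = a then 1 else 0) v s rfl]
    by_cases hv : v s.succ = a <;> simp [pathWeight, hv]
  rw [Finset.sum_congr rfl fun v _ => h v,
    path_sum (ins Q (s.1+1) (fun y => if y = a then 1 else 0)) n π (fun _ => 1)]
  simp only [mul_one,
    Pm_ins_mid' Q (fun y => if y = a then 1 else 0) (s.1+1) (n - (s.1+1)) n (by omega)
      (by omega : n = (s.1+1) + (n - (s.1+1)))]
  refine Finset.sum_congr rfl fun x _ => ?_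
  rw [← Finset.mul_sum]
  congr 1
  rw [rowCollapse hQrow (s.1+1) (n - (s.1+1)) _]
  simp [mul_ite, Finset.sum_ite_eq']

lemma sum_site_mid (a : Fin 2) (s t : Fin n) (hst : s.1 < t.1) (h : Fin 2 → ℝ) :
    ∑ v : Fin (n+1) → Fin 2,
        (if v s.succ = a then pathWeight n π Q v * h (v t.succ) else 0)
      = (∑ x, π x * Pm Q 0 (s.1+1) x a) * (∑ c, Pm Q (s.1+1) (t.1-s.1) a c * h c) := by
  have hp : ∀ v : Fin (n+1) → Fin 2,
      (if v s.succ = a then pathWeight n π Q v * h (v t.succ) else 0)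
        = π (v 0) *
            (∏ u : Fin n, ins (ins Q (s.1+1) (fun y => if y = a then 1 else 0)) (t.1+1) h
              (u.1 + 1) (v u.castSucc) (v u.succ)) *
            (fun _ : Fin 2 => (1:ℝ)) (v (Fin.last n)) := by
    intro v
    rw [prod_ins_one (ins Q (s.1+1) (fun y => if y = a then 1 else 0)) (t.1+1) h v t rfl,
      prod_ins_one Q (s.1+1) (fun y => if y = a then 1 else 0) v s rfl]
    by_cases hv : v s.succ = a <;> simp [pathWeight, hv] <;> ring
  rw [Finset.sum_congr rfl fun v _ => hp v,
    path_sum (ins (ins Q (s.1+1) (fun y => if y = a then 1 else 0)) (t.1+1) h) n π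
      (fun _ => 1)]
  simp only [mul_one,
    Pm_ins2 Q (fun y => if y = a then 1 else 0) h (s.1+1) (t.1+1) (t.1-s.1) (n - (t.1+1)) n
      (by omega) (by omega) (by omega) (by omega)]
  rw [Finset.sum_mul]
  refine Finset.sum_congr rfl fun x _ => ?_
  rw [← Finset.mul_sum]
  have collapse : ∑ b, ∑ c, ∑ d, Pm Q 0 (s.1+1) x c * (if c = a then (1:ℝ) else 0) *
      Pm Q (s.1+1) (t.1-s.1) c d * h d * Pm Q (t.1+1) (n - (t.1+1)) d b
      = ∑ c, ∑ d, Pm Q 0 (s.1+1) x c * (if c = a then (1:ℝ) else 0) *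
          Pm Q (s.1+1) (t.1-s.1) c d * h d := by
    rw [Finset.sum_comm]
    refine Finset.sum_congr rfl fun c _ => ?_
    exact rowCollapse hQrow (t.1+1) (n - (t.1+1)) _
  rw [collapse]
  have key : ∀ c : Fin 2, (∑ d, (Pm Q 0 (s.1+1) x c * if c = a then (1:ℝ) else 0) *
      Pm Q (s.1+1) (t.1-s.1) c d * h d)
      = if c = a then Pm Q 0 (s.1+1) x c * ∑ d, Pm Q (s.1+1) (t.1-s.1) c d * h d
        else 0 := by
    intro c
    by_cases hc : c = a
    · simp only [hc, if_true, mul_one, Finset.mul_sum]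
      exact Finset.sum_congr rfl fun d _ => by ring
    · simp [hc]
  rw [Finset.sum_congr rfl fun c _ => key c]
  simp only [Finset.sum_ite_eq', Finset.mem_univ, if_true]
  ring

end Elem

section Bridge

variable (n : ℕ) (π : Fin 2 → ℝ) (Q : ℕ → Fin 2 → Fin 2 → ℝ)
variable (hπ : ∀ a, 0 < π a) (hQpos : ∀ t a b, 0 < Q t a b)
variable (hQrow : ∀ t a, Q t a 0 + Q t a 1 = 1)

include hπ hQrow

lemma condExp_site0 (a : Fin 2) (t : Fin n) (g : Fin 2 → ℝ) :
    condExp' n π Q 0 a (fun v => g (v t.succ)) = ∑ b, Pm Q 0 (t.1+1) a b * g b := by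
  unfold condExp'
  rw [sum_den n π Q hQrow a, sum_site n π Q hQrow a t g]
  rw [mul_comm, mul_div_assoc, div_self (hπ a).ne', mul_one]

lemma condExp_site2 (a : Fin 2) (s t : Fin n) (hst : s.1 < t.1) (g h : Fin 2 → ℝ) :
    condExp' n π Q 0 a (fun v => g (v s.succ) * h (v t.succ))
      = ∑ b, ∑ c, Pm Q 0 (s.1+1) a b * g b * Pm Q (s.1+1) (t.1-s.1) b c * h c := by
  unfold condExp'
  rw [sum_den n π Q hQrow a, sum_site2 n π Q hQrow a s t hst g h]
  rw [mul_comm, mul_div_assoc, div_self (hπ a).ne', mul_one]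

lemma condProb_0 (t : Fin n) (a b : Fin 2) :
    condProb n π Q 0 t.succ a b = Pm Q 0 (t.1+1) a b := by
  unfold condProb
  rw [condExp_site0 n π Q hπ hQrow a t (fun y => if y = b then 1 else 0)]
  simp [mul_ite, Finset.sum_ite_eq']

include hQpos

lemma condProb_mid (s t : Fin n) (hst : s.1 < t.1) (a b : Fin 2) :
    condProb n π Q s.succ t.succ a b = Pm Q (s.1+1) (t.1-s.1) a b := by
  unfold condProb condExp'
  rw [sum_den_mid n π Q hQrow a s,
    sum_site_mid n π Q hQrow a s t hst (fun y => if y = b then 1 else 0)]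
  have hz : 0 < ∑ x, π x * Pm Q 0 (s.1+1) x a :=
    Finset.sum_pos (fun x _ => mul_pos (hπ x)
      (Pm_pos hQpos hQrow 0 (s.1+1) (by omega) x a)) ⟨0, Finset.mem_univ 0⟩
  rw [mul_comm, mul_div_assoc, div_self hz.ne', mul_one]
  simp [mul_ite, Finset.sum_ite_eq']

end Bridge

lemma fin2_cases (x : Fin 2) : x = 0 ∨ x = 1 := by
  fin_cases x
  · exact Or.inl rfl
  · exact Or.inr rfl

section Analysis

variable (n : ℕ) (π : Fin 2 → ℝ) (Q : ℕ → Fin 2 → Fin 2 → ℝ) (ℓ : ℕ → ℝ → Fin 2 → ℝ)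

noncomputable def wv (a : Fin 2) (v : Fin (n+1) → Fin 2) : ℝ :=
  if v 0 = a then pathWeight n π Q v else 0

noncomputable def ff (v : Fin (n+1) → Fin 2) (ε : ℝ) : ℝ :=
  ∑ t : Fin n, ℓ (t.1+1) ε (v t.succ)

noncomputable def fd1 (v : Fin (n+1) → Fin 2) (ε : ℝ) : ℝ :=
  ∑ t : Fin n, deriv (fun x => ℓ (t.1+1) x (v t.succ)) ε

noncomputable def fd2 (v : Fin (n+1) → Fin 2) (ε : ℝ) : ℝ :=
  ∑ t : Fin n, deriv (deriv (fun x => ℓ (t.1+1) x (v t.succ))) ε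

noncomputable def NN (a : Fin 2) (ε : ℝ) : ℝ :=
  ∑ v : Fin (n+1) → Fin 2, wv n π Q a v * Real.exp (ff n ℓ v ε)

noncomputable def NN1 (a : Fin 2) (ε : ℝ) : ℝ :=
  ∑ v : Fin (n+1) → Fin 2, wv n π Q a v * (Real.exp (ff n ℓ v ε) * fd1 n ℓ v ε)

noncomputable def NN2 (a : Fin 2) (ε : ℝ) : ℝ :=
  ∑ v : Fin (n+1) → Fin 2, wv n π Q a v *
    (Real.exp (ff n ℓ v ε) * fd1 n ℓ v ε * fd1 n ℓ v ε + Real.exp (ff n ℓ v ε) * fd2 n ℓ v ε)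

lemma mem_Icc_of_fin (t : Fin n) : t.1 + 1 ∈ Finset.Icc 1 n := by
  simp only [Finset.mem_Icc]
  exact ⟨by omega, t.isLt⟩

lemma hasDerivAt_ff (hdiff : ∀ t ∈ Finset.Icc 1 n, ∀ a, Differentiable ℝ fun ε => ℓ t ε a)
    (v : Fin (n+1) → Fin 2) (ε : ℝ) :
    HasDerivAt (ff n ℓ v) (fd1 n ℓ v ε) ε := by
  apply HasDerivAt.fun_sum
  intro t _
  exact ((hdiff (t.1+1) (mem_Icc_of_fin n t) (v t.succ)).differentiableAt).hasDerivAt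

lemma hasDerivAt_fd1
    (hdiff2 : ∀ t ∈ Finset.Icc 1 n, ∀ a, Differentiable ℝ (deriv fun ε => ℓ t ε a))
    (v : Fin (n+1) → Fin 2) (ε : ℝ) :
    HasDerivAt (fd1 n ℓ v) (fd2 n ℓ v ε) ε := by
  apply HasDerivAt.fun_sum
  intro t _
  exact ((hdiff2 (t.1+1) (mem_Icc_of_fin n t) (v t.succ)).differentiableAt).hasDerivAt

lemma hasDerivAt_NN (hdiff : ∀ t ∈ Finset.Icc 1 n, ∀ a, Differentiable ℝ fun ε => ℓ t ε a)
    (a : Fin 2) (ε : ℝ) :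
    HasDerivAt (NN n π Q ℓ a) (NN1 n π Q ℓ a ε) ε := by
  apply HasDerivAt.fun_sum
  intro v _
  exact ((hasDerivAt_ff n ℓ hdiff v ε).exp).const_mul _

lemma hasDerivAt_NN1 (hdiff : ∀ t ∈ Finset.Icc 1 n, ∀ a, Differentiable ℝ fun ε => ℓ t ε a)
    (hdiff2 : ∀ t ∈ Finset.Icc 1 n, ∀ a, Differentiable ℝ (deriv fun ε => ℓ t ε a))
    (a : Fin 2) (ε : ℝ) :
    HasDerivAt (NN1 n π Q ℓ a) (NN2 n π Q ℓ a ε) ε := by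
  apply HasDerivAt.fun_sum
  intro v _
  exact (((hasDerivAt_ff n ℓ hdiff v ε).exp).mul (hasDerivAt_fd1 n ℓ hdiff2 v ε)).const_mul _

lemma pathWeight_pos (hπ : ∀ a, 0 < π a) (hQpos : ∀ t a b, 0 < Q t a b)
    (v : Fin (n+1) → Fin 2) : 0 < pathWeight n π Q v :=
  mul_pos (hπ _) (Finset.prod_pos fun _ _ => hQpos _ _ _)

lemma wv_nonneg (hπ : ∀ a, 0 < π a) (hQpos : ∀ t a b, 0 < Q t a b)
    (a : Fin 2) (v : Fin (n+1) → Fin 2) : 0 ≤ wv n π Q a v := by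
  unfold wv; split
  · exact (pathWeight_pos n π Q hπ hQpos v).le
  · exact le_rfl

lemma NN_pos (hπ : ∀ a, 0 < π a) (hQpos : ∀ t a b, 0 < Q t a b)
    (a : Fin 2) (ε : ℝ) : 0 < NN n π Q ℓ a ε := by
  apply Finset.sum_pos'
  · intro v _
    exact mul_nonneg (wv_nonneg n π Q hπ hQpos a v) (Real.exp_pos _).le
  · refine ⟨fun _ => a, Finset.mem_univ _, ?_⟩
    have h : wv n π Q a (fun _ => a) = pathWeight n π Q (fun _ => a) := by
      unfold wv; simp
    rw [h]
    exact mul_pos (pathWeight_pos n π Q hπ hQpos _) (Real.exp_pos _)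

lemma L_eq (hπ : ∀ a, 0 < π a) (hQpos : ∀ t a b, 0 < Q t a b)
    (hQrow : ∀ t a, Q t a 0 + Q t a 1 = 1) (a : Fin 2) :
    (fun ε => Real.log (condExp' n π Q 0 a fun v =>
        Real.exp (∑ t : Fin n, ℓ (t.1 + 1) ε (v t.succ))))
      = fun ε => Real.log (NN n π Q ℓ a ε) - Real.log (π a) := by
  funext ε
  unfold condExp'
  rw [sum_den n π Q hQrow a]
  have hnum : (∑ v : Fin (n+1) → Fin 2,
      if v 0 = a then pathWeight n π Q v * Real.exp (∑ t : Fin n, ℓ (t.1 + 1) ε (v t.succ))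
      else 0) = NN n π Q ℓ a ε := by
    refine Finset.sum_congr rfl fun v _ => ?_
    by_cases hv : v 0 = a <;> simp [NN, wv, ff, hv]
  rw [hnum, Real.log_div (NN_pos n π Q ℓ hπ hQpos a ε).ne' (hπ a).ne']

lemma deriv_L (hπ : ∀ a, 0 < π a) (hQpos : ∀ t a b, 0 < Q t a b)
    (hQrow : ∀ t a, Q t a 0 + Q t a 1 = 1)
    (hdiff : ∀ t ∈ Finset.Icc 1 n, ∀ a, Differentiable ℝ fun ε => ℓ t ε a) (a : Fin 2) :
    deriv (fun ε => Real.log (condExp' n π Q 0 a fun v =>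
        Real.exp (∑ t : Fin n, ℓ (t.1 + 1) ε (v t.succ))))
      = fun ε => NN1 n π Q ℓ a ε / NN n π Q ℓ a ε := by
  rw [L_eq n π Q ℓ hπ hQpos hQrow a]
  funext ε
  have h : HasDerivAt (fun ε => Real.log (NN n π Q ℓ a ε) - Real.log (π a))
      (NN1 n π Q ℓ a ε / NN n π Q ℓ a ε) ε :=
    (((hasDerivAt_NN n π Q ℓ hdiff a ε).log (NN_pos n π Q ℓ hπ hQpos a ε).ne')).sub_const _
  exact h.deriv

lemma ff_at_0 (h0 : ∀ t ∈ Finset.Icc 1 n, ℓ t 0 1 = ℓ t 0 0) (v : Fin (n+1) → Fin 2) :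
    ff n ℓ v 0 = ∑ t : Fin n, ℓ (t.1+1) 0 0 := by
  refine Finset.sum_congr rfl fun t _ => ?_
  rcases fin2_cases (v t.succ) with h | h
  · rw [h]
  · rw [h]; exact h0 (t.1+1) (mem_Icc_of_fin n t)

lemma log_deriv2 (hπ : ∀ a, 0 < π a) (hQpos : ∀ t a b, 0 < Q t a b)
    (hQrow : ∀ t a, Q t a 0 + Q t a 1 = 1)
    (hdiff : ∀ t ∈ Finset.Icc 1 n, ∀ a, Differentiable ℝ fun ε => ℓ t ε a)
    (hdiff2 : ∀ t ∈ Finset.Icc 1 n, ∀ a, Differentiable ℝ (deriv fun ε => ℓ t ε a))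
    (h0 : ∀ t ∈ Finset.Icc 1 n, ℓ t 0 1 = ℓ t 0 0) (a : Fin 2) :
    HasDerivAt (deriv (fun ε => Real.log (condExp' n π Q 0 a fun v =>
        Real.exp (∑ t : Fin n, ℓ (t.1 + 1) ε (v t.succ)))))
      ((((∑ v : Fin (n+1) → Fin 2, wv n π Q a v * fd2 n ℓ v 0) +
          (∑ v : Fin (n+1) → Fin 2, wv n π Q a v * (fd1 n ℓ v 0)^2)) / π a) -
        ((∑ v : Fin (n+1) → Fin 2, wv n π Q a v * fd1 n ℓ v 0) / π a)^2) 0 := by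
  rw [deriv_L n π Q ℓ hπ hQpos hQrow hdiff a]
  have hd : HasDerivAt (fun ε => NN1 n π Q ℓ a ε / NN n π Q ℓ a ε)
      ((NN2 n π Q ℓ a 0 * NN n π Q ℓ a 0 - NN1 n π Q ℓ a 0 * NN1 n π Q ℓ a 0) /
        (NN n π Q ℓ a 0)^2) 0 :=
    (hasDerivAt_NN1 n π Q ℓ hdiff hdiff2 a 0).div (hasDerivAt_NN n π Q ℓ hdiff a 0)
      (NN_pos n π Q ℓ hπ hQpos a 0).ne'
  have hconv :
      ((((∑ v : Fin (n+1) → Fin 2, wv n π Q a v * fd2 n ℓ v 0) +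
          (∑ v : Fin (n+1) → Fin 2, wv n π Q a v * (fd1 n ℓ v 0)^2)) / π a) -
        ((∑ v : Fin (n+1) → Fin 2, wv n π Q a v * fd1 n ℓ v 0) / π a)^2)
      = ((NN2 n π Q ℓ a 0 * NN n π Q ℓ a 0 - NN1 n π Q ℓ a 0 * NN1 n π Q ℓ a 0) /
        (NN n π Q ℓ a 0)^2) := by
    set c := ∑ t : Fin n, ℓ (t.1+1) 0 0 with hc
    have e0 : NN n π Q ℓ a 0 = Real.exp c * π a := by
      unfold NN
      rw [← sum_den n π Q hQrow a, Finset.mul_sum]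
      refine Finset.sum_congr rfl fun v _ => ?_
      rw [ff_at_0 n ℓ h0 v, ← hc]
      unfold wv
      ring
    have e1 : NN1 n π Q ℓ a 0 = Real.exp c * ∑ v : Fin (n+1) → Fin 2, wv n π Q a v * fd1 n ℓ v 0 := by
      unfold NN1
      rw [Finset.mul_sum]
      refine Finset.sum_congr rfl fun v _ => ?_
      rw [ff_at_0 n ℓ h0 v, ← hc]
      ring
    have e2 : NN2 n π Q ℓ a 0 = Real.exp c *
        ((∑ v : Fin (n+1) → Fin 2, wv n π Q a v * fd2 n ℓ v 0) +
         (∑ v : Fin (n+1) → Fin 2, wv n π Q a v * (fd1 n ℓ v 0)^2)) := by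
      unfold NN2
      rw [mul_add, Finset.mul_sum, Finset.mul_sum, ← Finset.sum_add_distrib]
      refine Finset.sum_congr rfl fun v _ => ?_
      rw [ff_at_0 n ℓ h0 v, ← hc]
      ring
    rw [e0, e1, e2]
    have hexp := Real.exp_ne_zero c
    have hπa := (hπ a).ne'
    field_simp
  rw [hconv]
  exact hd

end Analysis

lemma sum_split {n : ℕ} (M : Fin n → Fin n → ℝ) (hsym : ∀ s t, M s t = M t s) :
    ∑ s : Fin n, ∑ t : Fin n, M s t
      = (∑ t : Fin n, M t t)
        + 2 * ∑ t : Fin n, ∑ s ∈ Finset.univ.filter (fun s => s < t), M s t := by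
  have h1 : ∀ t : Fin n, ∑ s : Fin n, M s t
      = (∑ s ∈ Finset.univ.filter (fun s => s < t), M s t) + M t t
        + ∑ s ∈ Finset.univ.filter (fun s => t < s), M s t := by
    intro t
    have : Finset.univ.filter (fun s => ¬ s < t) = insert t (Finset.univ.filter (fun s => t < s)) := by
      ext s
      simp only [Finset.mem_filter, Finset.mem_univ, true_and, Finset.mem_insert, not_lt]
      constructor
      · intro h
        rcases eq_or_lt_of_le h with h' | h'
        · exact Or.inl h'.symm
        · exact Or.inr h'
      · rintro (rfl | h)
        · exact le_rfl
        · exact h.le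
    rw [← Finset.sum_filter_add_sum_filter_not Finset.univ (fun s => s < t) (fun s => M s t),
      this, Finset.sum_insert (by simp)]
    ring
  rw [Finset.sum_comm, Finset.sum_congr rfl fun t _ => h1 t]
  rw [Finset.sum_add_distrib, Finset.sum_add_distrib]
  have h2 : ∑ t : Fin n, ∑ s ∈ Finset.univ.filter (fun s => t < s), M s t
      = ∑ t : Fin n, ∑ s ∈ Finset.univ.filter (fun s => s < t), M s t := by
    rw [Finset.sum_comm' (s' := fun s => Finset.univ.filter (fun t => t < s))
      (t' := Finset.univ)]
    · refine Finset.sum_congr rfl fun s _ => Finset.sum_congr rfl fun t _ => hsym _ _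
    · intro t s
      simp only [Finset.mem_filter, Finset.mem_univ, true_and, and_true]
  rw [h2]
  ring

section Algebra

variable (n : ℕ) (Q : ℕ → Fin 2 → Fin 2 → ℝ)
variable (hQrow : ∀ t a, Q t a 0 + Q t a 1 = 1)

include hQrow

lemma diag_term (t : Fin n) (g H : Fin 2 → ℝ) :
    ((∑ b, Pm Q 0 (t.1+1) 1 b * H b) - (∑ b, Pm Q 0 (t.1+1) 0 b * H b))
      + (((∑ b, Pm Q 0 (t.1+1) 1 b * (g b * g b)) - (∑ b, Pm Q 0 (t.1+1) 1 b * g b)^2)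
        - ((∑ b, Pm Q 0 (t.1+1) 0 b * (g b * g b)) - (∑ b, Pm Q 0 (t.1+1) 0 b * g b)^2))
    = (Pm Q 0 (t.1+1) 1 1 - Pm Q 0 (t.1+1) 0 1) *
        ((H 1 - H 0) + (Pm Q 0 (t.1+1) 1 0 - Pm Q 0 (t.1+1) 0 1) * (g 1 - g 0)^2) := by
  have r1 : Pm Q 0 (t.1+1) 1 0 = 1 - Pm Q 0 (t.1+1) 1 1 := by
    have := Pm_rowsum hQrow 0 (t.1+1) 1; rw [Fin.sum_univ_two] at this; linarith
  have r0 : Pm Q 0 (t.1+1) 0 0 = 1 - Pm Q 0 (t.1+1) 0 1 := by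
    have := Pm_rowsum hQrow 0 (t.1+1) 0; rw [Fin.sum_univ_two] at this; linarith
  simp only [Fin.sum_univ_two, r1, r0]
  ring

lemma cross_term (s t : Fin n) (hst : s.1 < t.1) (gs gt : Fin 2 → ℝ) :
    ((∑ b, ∑ c, Pm Q 0 (s.1+1) 1 b * gs b * Pm Q (s.1+1) (t.1-s.1) b c * gt c)
        - (∑ b, Pm Q 0 (s.1+1) 1 b * gs b) * (∑ c, Pm Q 0 (t.1+1) 1 c * gt c))
      - ((∑ b, ∑ c, Pm Q 0 (s.1+1) 0 b * gs b * Pm Q (s.1+1) (t.1-s.1) b c * gt c)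
        - (∑ b, Pm Q 0 (s.1+1) 0 b * gs b) * (∑ c, Pm Q 0 (t.1+1) 0 c * gt c))
    = (gt 1 - gt 0) *
        ((Pm Q 0 (s.1+1) 1 1 - Pm Q 0 (s.1+1) 0 1) *
            ((Pm Q (s.1+1) (t.1-s.1) 1 1 - Pm Q (s.1+1) (t.1-s.1) 0 1) * Pm Q 0 (s.1+1) 0 0
              - (Pm Q 0 (t.1+1) 1 1 - Pm Q 0 (t.1+1) 0 1)) * (gs 1 - gs 0)
          + (Pm Q 0 (s.1+1) 1 1 - Pm Q 0 (s.1+1) 0 1) *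
              (Pm Q (s.1+1) (t.1-s.1) 1 1 - Pm Q (s.1+1) (t.1-s.1) 0 1) * gs 0
          - (Pm Q 0 (t.1+1) 1 1 - Pm Q 0 (t.1+1) 0 1) *
              (∑ b, Pm Q 0 (s.1+1) 0 b * gs b)) := by
  have ch : ∀ a c : Fin 2, Pm Q 0 (t.1+1) a c
      = Pm Q 0 (s.1+1) a 0 * Pm Q (s.1+1) (t.1-s.1) 0 c
        + Pm Q 0 (s.1+1) a 1 * Pm Q (s.1+1) (t.1-s.1) 1 c := by
    intro a c
    have h := Pm_chapman Q 0 (s.1+1) (t.1-s.1) a c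
    rw [Fin.sum_univ_two, Nat.zero_add] at h
    rw [show t.1+1 = (s.1+1) + (t.1-s.1) by omega]
    exact h
  have r1 : Pm Q 0 (s.1+1) 1 0 = 1 - Pm Q 0 (s.1+1) 1 1 := by
    have := Pm_rowsum hQrow 0 (s.1+1) 1; rw [Fin.sum_univ_two] at this; linarith
  have r0 : Pm Q 0 (s.1+1) 0 0 = 1 - Pm Q 0 (s.1+1) 0 1 := by
    have := Pm_rowsum hQrow 0 (s.1+1) 0; rw [Fin.sum_univ_two] at this; linarith
  have q1 : Pm Q (s.1+1) (t.1-s.1) 1 0 = 1 - Pm Q (s.1+1) (t.1-s.1) 1 1 := by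
    have := Pm_rowsum hQrow (s.1+1) (t.1-s.1) 1; rw [Fin.sum_univ_two] at this; linarith
  have q0 : Pm Q (s.1+1) (t.1-s.1) 0 0 = 1 - Pm Q (s.1+1) (t.1-s.1) 0 1 := by
    have := Pm_rowsum hQrow (s.1+1) (t.1-s.1) 0; rw [Fin.sum_univ_two] at this; linarith
  simp only [Fin.sum_univ_two, ch, r1, r0, q1, q0]
  ring

end Algebra

section Assemble

variable (n : ℕ) (π : Fin 2 → ℝ) (Q : ℕ → Fin 2 → Fin 2 → ℝ) (ℓ : ℕ → ℝ → Fin 2 → ℝ)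

noncomputable def Ysum (a : Fin 2) (s t : Fin n) : ℝ :=
  ∑ v : Fin (n+1) → Fin 2, wv n π Q a v *
    (deriv (fun x => ℓ (s.1+1) x (v s.succ)) 0 * deriv (fun x => ℓ (t.1+1) x (v t.succ)) 0)

variable (hπ : ∀ a, 0 < π a) (hQrow : ∀ t a, Q t a 0 + Q t a 1 = 1)

include hπ hQrow

lemma A1_eq (a : Fin 2) :
    (∑ v : Fin (n+1) → Fin 2, wv n π Q a v * fd1 n ℓ v 0)
      = π a * ∑ t : Fin n, ∑ b, Pm Q 0 (t.1+1) a b * deriv (fun e => ℓ (t.1+1) e b) 0 := by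
  unfold wv fd1
  conv_lhs => simp only [Finset.mul_sum]
  rw [Finset.sum_comm, Finset.mul_sum]
  refine Finset.sum_congr rfl fun t _ => ?_
  rw [← sum_site n π Q hQrow a t (fun x => deriv (fun e => ℓ (t.1+1) e x) 0)]
  refine Finset.sum_congr rfl fun v _ => ?_
  by_cases hv : v 0 = a <;> simp [hv]

lemma A3_eq (a : Fin 2) :
    (∑ v : Fin (n+1) → Fin 2, wv n π Q a v * fd2 n ℓ v 0)
      = π a * ∑ t : Fin n, ∑ b, Pm Q 0 (t.1+1) a b * deriv (deriv (fun e => ℓ (t.1+1) e b)) 0 := by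
  unfold wv fd2
  conv_lhs => simp only [Finset.mul_sum]
  rw [Finset.sum_comm, Finset.mul_sum]
  refine Finset.sum_congr rfl fun t _ => ?_
  rw [← sum_site n π Q hQrow a t (fun x => deriv (deriv (fun e => ℓ (t.1+1) e x)) 0)]
  refine Finset.sum_congr rfl fun v _ => ?_
  by_cases hv : v 0 = a <;> simp [hv]

lemma A2_eq (a : Fin 2) :
    (∑ v : Fin (n+1) → Fin 2, wv n π Q a v * (fd1 n ℓ v 0)^2)
      = ∑ s : Fin n, ∑ t : Fin n, Ysum n π Q ℓ a s t := by
  unfold Ysum fd1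
  have hsq : ∀ v : Fin (n+1) → Fin 2,
      (∑ t : Fin n, deriv (fun x => ℓ (t.1+1) x (v t.succ)) 0)^2
        = ∑ s : Fin n, ∑ t : Fin n,
            deriv (fun x => ℓ (s.1+1) x (v s.succ)) 0 * deriv (fun x => ℓ (t.1+1) x (v t.succ)) 0 := by
    intro v
    rw [sq, Finset.sum_mul_sum]
  rw [Finset.sum_congr rfl fun v _ => by rw [hsq v]]
  simp only [Finset.mul_sum]
  rw [Finset.sum_comm]
  exact Finset.sum_congr rfl fun s _ => Finset.sum_comm

lemma Ysum_symm (a : Fin 2) (s t : Fin n) : Ysum n π Q ℓ a s t = Ysum n π Q ℓ a t s := by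
  unfold Ysum
  exact Finset.sum_congr rfl fun v _ => by ring

lemma Ysum_diag (a : Fin 2) (t : Fin n) :
    Ysum n π Q ℓ a t t
      = π a * ∑ b, Pm Q 0 (t.1+1) a b *
          (deriv (fun e => ℓ (t.1+1) e b) 0 * deriv (fun e => ℓ (t.1+1) e b) 0) := by
  unfold Ysum wv
  rw [← sum_site n π Q hQrow a t
    (fun x => deriv (fun e => ℓ (t.1+1) e x) 0 * deriv (fun e => ℓ (t.1+1) e x) 0)]
  refine Finset.sum_congr rfl fun v _ => ?_
  by_cases hv : v 0 = a <;> simp [hv]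

lemma Ysum_cross (a : Fin 2) (s t : Fin n) (hst : s.1 < t.1) :
    Ysum n π Q ℓ a s t
      = π a * ∑ b, ∑ c, Pm Q 0 (s.1+1) a b * deriv (fun e => ℓ (s.1+1) e b) 0 *
          Pm Q (s.1+1) (t.1-s.1) b c * deriv (fun e => ℓ (t.1+1) e c) 0 := by
  unfold Ysum wv
  rw [← sum_site2 n π Q hQrow a s t hst
    (fun x => deriv (fun e => ℓ (s.1+1) e x) 0) (fun x => deriv (fun e => ℓ (t.1+1) e x) 0)]
  refine Finset.sum_congr rfl fun v _ => ?_
  by_cases hv : v 0 = a <;> simp [hv]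

lemma Veq (a : Fin 2) :
    (((∑ v : Fin (n+1) → Fin 2, wv n π Q a v * fd2 n ℓ v 0) +
        (∑ v : Fin (n+1) → Fin 2, wv n π Q a v * (fd1 n ℓ v 0)^2)) / π a) -
      ((∑ v : Fin (n+1) → Fin 2, wv n π Q a v * fd1 n ℓ v 0) / π a)^2
    = (∑ t : Fin n, ∑ b, Pm Q 0 (t.1+1) a b * deriv (deriv (fun e => ℓ (t.1+1) e b)) 0)
      + (∑ t : Fin n,
          ((∑ b, Pm Q 0 (t.1+1) a b *
              (deriv (fun e => ℓ (t.1+1) e b) 0 * deriv (fun e => ℓ (t.1+1) e b) 0))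
            - (∑ b, Pm Q 0 (t.1+1) a b * deriv (fun e => ℓ (t.1+1) e b) 0)^2))
      + 2 * ∑ t : Fin n, ∑ s ∈ Finset.univ.filter (fun s => s < t),
          ((∑ b, ∑ c, Pm Q 0 (s.1+1) a b * deriv (fun e => ℓ (s.1+1) e b) 0 *
              Pm Q (s.1+1) (t.1-s.1) b c * deriv (fun e => ℓ (t.1+1) e c) 0)
            - (∑ b, Pm Q 0 (s.1+1) a b * deriv (fun e => ℓ (s.1+1) e b) 0) *
              (∑ c, Pm Q 0 (t.1+1) a c * deriv (fun e => ℓ (t.1+1) e c) 0)) := by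
  have hπa := (hπ a).ne'
  rw [A1_eq n π Q ℓ hπ hQrow a, A2_eq n π Q ℓ hπ hQrow a, A3_eq n π Q ℓ hπ hQrow a]
  rw [add_div, mul_div_cancel_left₀ _ hπa, mul_div_cancel_left₀ _ hπa]
  have hsq : (∑ t : Fin n, ∑ b, Pm Q 0 (t.1+1) a b * deriv (fun e => ℓ (t.1+1) e b) 0)^2
      = ∑ s : Fin n, ∑ t : Fin n,
          (∑ b, Pm Q 0 (s.1+1) a b * deriv (fun e => ℓ (s.1+1) e b) 0) *
          (∑ c, Pm Q 0 (t.1+1) a c * deriv (fun e => ℓ (t.1+1) e c) 0) := by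
    rw [sq, Finset.sum_mul_sum]
  rw [hsq, Finset.sum_div]
  simp only [Finset.sum_div]
  rw [add_sub_assoc, ← Finset.sum_sub_distrib]
  simp only [← Finset.sum_sub_distrib]
  rw [sum_split (fun s t => Ysum n π Q ℓ a s t / π a -
      (∑ b, Pm Q 0 (s.1+1) a b * deriv (fun e => ℓ (s.1+1) e b) 0) *
      (∑ c, Pm Q 0 (t.1+1) a c * deriv (fun e => ℓ (t.1+1) e c) 0))
    (fun s t => by beta_reduce; rw [Ysum_symm n π Q ℓ hπ hQrow a s t]; ring)]
  rw [add_assoc]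
  congr 1
  congr 1
  · refine Finset.sum_congr rfl fun t _ => ?_
    rw [Ysum_diag n π Q ℓ hπ hQrow a t, mul_div_cancel_left₀ _ hπa, ← sq]
  · congr 1
    refine Finset.sum_congr rfl fun t _ => Finset.sum_congr rfl fun s hs => ?_
    have hst : s.1 < t.1 := Finset.mem_filter.mp hs |>.2
    rw [Ysum_cross n π Q ℓ hπ hQrow a s t hst, mul_div_cancel_left₀ _ hπa]

end Assemble


/-- For a binary Markov chain `σ = (σ₀,…,σ_n)` as above and
`ℓ t (ε, a)` twice differentiable in `ε` with `ℓ t (0,1) = ℓ t (0,0)` for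
`t = 1,…,n`, the quantity
`λ_n(ε) = ln E[e^{S_n(ε)} | σ₀ = 1] − ln E[e^{S_n(ε)} | σ₀ = 0]` satisfies
`λ_n''(0) = ∑_{t=1}^n D_{0t} { d_t''(0) + [P_{0t}(1,0) − P_{0t}(0,1)] d_t'(0)² }
  + 2 ∑_{t=1}^n d_t'(0) ∑_{s=1}^{t−1} u_{st}`, where
`u_{st} = D_{0s}[D_{st} P_{0s}(0,0) − D_{0t}] d_s'(0) + D_{0s} D_{st} ℓ_s'(0,0)
  − D_{0t} E[ℓ_s'(0,σ_s) | σ₀ = 0]`. -/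
theorem stmt11 (n : ℕ) (π : Fin 2 → ℝ) (Q : ℕ → Fin 2 → Fin 2 → ℝ)
    (hπ : ∀ a, 0 < π a) (hπsum : π 0 + π 1 = 1)
    (hQpos : ∀ t a b, 0 < Q t a b) (hQrow : ∀ t a, Q t a 0 + Q t a 1 = 1)
    (ℓ : ℕ → ℝ → Fin 2 → ℝ)
    (hdiff : ∀ t ∈ Finset.Icc 1 n, ∀ a, Differentiable ℝ fun ε => ℓ t ε a)
    (hdiff2 : ∀ t ∈ Finset.Icc 1 n, ∀ a, Differentiable ℝ (deriv fun ε => ℓ t ε a))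
    (h0 : ∀ t ∈ Finset.Icc 1 n, ℓ t 0 1 = ℓ t 0 0) :
    deriv (deriv (fun ε =>
        Real.log (condExp' n π Q 0 1 fun v =>
          Real.exp (∑ t : Fin n, ℓ (t.1 + 1) ε (v t.succ))) -
        Real.log (condExp' n π Q 0 0 fun v =>
          Real.exp (∑ t : Fin n, ℓ (t.1 + 1) ε (v t.succ))))) 0 =
      (∑ t : Fin n, Dst n π Q 0 t.succ *
        (deriv (deriv fun ε => ℓ (t.1 + 1) ε 1 - ℓ (t.1 + 1) ε 0) 0 +
          (condProb n π Q 0 t.succ 1 0 - condProb n π Q 0 t.succ 0 1) *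
            (deriv (fun ε => ℓ (t.1 + 1) ε 1 - ℓ (t.1 + 1) ε 0) 0) ^ 2)) +
      2 * ∑ t : Fin n, deriv (fun ε => ℓ (t.1 + 1) ε 1 - ℓ (t.1 + 1) ε 0) 0 *
        ∑ s ∈ Finset.univ.filter (fun s : Fin n => s < t),
          (Dst n π Q 0 s.succ *
              (Dst n π Q s.succ t.succ * condProb n π Q 0 s.succ 0 0 -
                Dst n π Q 0 t.succ) *
              deriv (fun ε => ℓ (s.1 + 1) ε 1 - ℓ (s.1 + 1) ε 0) 0 +
            Dst n π Q 0 s.succ * Dst n π Q s.succ t.succ *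
              deriv (fun ε => ℓ (s.1 + 1) ε 0) 0 -
            Dst n π Q 0 t.succ *
              condExp' n π Q 0 0 (fun v =>
                deriv (fun ε => ℓ (s.1 + 1) ε (v s.succ)) 0)) := by
  -- first-derivative facts
  have hLdiff : ∀ a, Differentiable ℝ (fun ε => Real.log (condExp' n π Q 0 a fun v =>
      Real.exp (∑ t : Fin n, ℓ (t.1 + 1) ε (v t.succ)))) := by
    intro a
    rw [L_eq n π Q ℓ hπ hQpos hQrow a]
    intro ε
    exact (((hasDerivAt_NN n π Q ℓ hdiff a ε).log
      (NN_pos n π Q ℓ hπ hQpos a ε).ne').sub_const _).differentiableAt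
  have h1 := log_deriv2 n π Q ℓ hπ hQpos hQrow hdiff hdiff2 h0 1
  have h00 := log_deriv2 n π Q ℓ hπ hQpos hQrow hdiff hdiff2 h0 0
  have stepA : deriv (fun ε =>
      Real.log (condExp' n π Q 0 1 fun v =>
        Real.exp (∑ t : Fin n, ℓ (t.1 + 1) ε (v t.succ))) -
      Real.log (condExp' n π Q 0 0 fun v =>
        Real.exp (∑ t : Fin n, ℓ (t.1 + 1) ε (v t.succ))))
    = fun ε =>
      deriv (fun ε' => Real.log (condExp' n π Q 0 1 fun v =>
        Real.exp (∑ t : Fin n, ℓ (t.1 + 1) ε' (v t.succ)))) ε -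
      deriv (fun ε' => Real.log (condExp' n π Q 0 0 fun v =>
        Real.exp (∑ t : Fin n, ℓ (t.1 + 1) ε' (v t.succ)))) ε := by
    funext ε
    exact deriv_fun_sub ((hLdiff 1) ε) ((hLdiff 0) ε)
  rw [stepA, (h1.fun_sub h00).deriv]
  rw [Veq n π Q ℓ hπ hQrow 1, Veq n π Q ℓ hπ hQrow 0]
  -- derivative rewrites for the right-hand side
  have hd1 : ∀ t : Fin n, deriv (fun ε => ℓ (t.1+1) ε 1 - ℓ (t.1+1) ε 0) 0
      = deriv (fun e => ℓ (t.1+1) e 1) 0 - deriv (fun e => ℓ (t.1+1) e 0) 0 := fun t =>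
    deriv_fun_sub ((hdiff (t.1+1) (mem_Icc_of_fin n t) 1) 0) ((hdiff (t.1+1) (mem_Icc_of_fin n t) 0) 0)
  have hd2 : ∀ t : Fin n, deriv (deriv fun ε => ℓ (t.1+1) ε 1 - ℓ (t.1+1) ε 0) 0
      = deriv (deriv (fun e => ℓ (t.1+1) e 1)) 0 - deriv (deriv (fun e => ℓ (t.1+1) e 0)) 0 := by
    intro t
    have hfun : (deriv fun ε => ℓ (t.1+1) ε 1 - ℓ (t.1+1) ε 0)
        = fun ε => deriv (fun e => ℓ (t.1+1) e 1) ε - deriv (fun e => ℓ (t.1+1) e 0) ε :=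
      funext fun ε => deriv_fun_sub ((hdiff (t.1+1) (mem_Icc_of_fin n t) 1) ε)
        ((hdiff (t.1+1) (mem_Icc_of_fin n t) 0) ε)
    rw [hfun]
    exact deriv_fun_sub ((hdiff2 (t.1+1) (mem_Icc_of_fin n t) 1) 0)
      ((hdiff2 (t.1+1) (mem_Icc_of_fin n t) 0) 0)
  -- bridge the RHS to Pm form
  have hB : (∑ t : Fin n, Dst n π Q 0 t.succ *
        (deriv (deriv fun ε => ℓ (t.1 + 1) ε 1 - ℓ (t.1 + 1) ε 0) 0 +
          (condProb n π Q 0 t.succ 1 0 - condProb n π Q 0 t.succ 0 1) *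
            (deriv (fun ε => ℓ (t.1 + 1) ε 1 - ℓ (t.1 + 1) ε 0) 0) ^ 2))
      = ∑ t : Fin n, (Pm Q 0 (t.1+1) 1 1 - Pm Q 0 (t.1+1) 0 1) *
          ((deriv (deriv (fun e => ℓ (t.1+1) e 1)) 0 - deriv (deriv (fun e => ℓ (t.1+1) e 0)) 0)
            + (Pm Q 0 (t.1+1) 1 0 - Pm Q 0 (t.1+1) 0 1) *
              (deriv (fun e => ℓ (t.1+1) e 1) 0 - deriv (fun e => ℓ (t.1+1) e 0) 0)^2) := by
    refine Finset.sum_congr rfl fun t _ => ?_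
    unfold Dst
    rw [condProb_0 n π Q hπ hQrow t 1 1, condProb_0 n π Q hπ hQrow t 0 1,
      condProb_0 n π Q hπ hQrow t 1 0, hd1 t, hd2 t]
  have hS : (∑ t : Fin n, deriv (fun ε => ℓ (t.1 + 1) ε 1 - ℓ (t.1 + 1) ε 0) 0 *
        ∑ s ∈ Finset.univ.filter (fun s : Fin n => s < t),
          (Dst n π Q 0 s.succ *
              (Dst n π Q s.succ t.succ * condProb n π Q 0 s.succ 0 0 -
                Dst n π Q 0 t.succ) *
              deriv (fun ε => ℓ (s.1 + 1) ε 1 - ℓ (s.1 + 1) ε 0) 0 +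
            Dst n π Q 0 s.succ * Dst n π Q s.succ t.succ *
              deriv (fun ε => ℓ (s.1 + 1) ε 0) 0 -
            Dst n π Q 0 t.succ *
              condExp' n π Q 0 0 (fun v =>
                deriv (fun ε => ℓ (s.1 + 1) ε (v s.succ)) 0)))
      = ∑ t : Fin n, ∑ s ∈ Finset.univ.filter (fun s : Fin n => s < t),
          (deriv (fun e => ℓ (t.1+1) e 1) 0 - deriv (fun e => ℓ (t.1+1) e 0) 0) *
            ((Pm Q 0 (s.1+1) 1 1 - Pm Q 0 (s.1+1) 0 1) *
                ((Pm Q (s.1+1) (t.1-s.1) 1 1 - Pm Q (s.1+1) (t.1-s.1) 0 1) * Pm Q 0 (s.1+1) 0 0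
                  - (Pm Q 0 (t.1+1) 1 1 - Pm Q 0 (t.1+1) 0 1)) *
                (deriv (fun e => ℓ (s.1+1) e 1) 0 - deriv (fun e => ℓ (s.1+1) e 0) 0)
              + (Pm Q 0 (s.1+1) 1 1 - Pm Q 0 (s.1+1) 0 1) *
                  (Pm Q (s.1+1) (t.1-s.1) 1 1 - Pm Q (s.1+1) (t.1-s.1) 0 1) *
                  deriv (fun e => ℓ (s.1+1) e 0) 0
              - (Pm Q 0 (t.1+1) 1 1 - Pm Q 0 (t.1+1) 0 1) *
                  (∑ b, Pm Q 0 (s.1+1) 0 b * deriv (fun e => ℓ (s.1+1) e b) 0)) := by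
    refine Finset.sum_congr rfl fun t _ => ?_
    rw [hd1 t, Finset.mul_sum]
    refine Finset.sum_congr rfl fun s hs => ?_
    have hst : s.1 < t.1 := Finset.mem_filter.mp hs |>.2
    unfold Dst
    rw [condProb_0 n π Q hπ hQrow s 1 1, condProb_0 n π Q hπ hQrow s 0 1,
      condProb_0 n π Q hπ hQrow t 1 1, condProb_0 n π Q hπ hQrow t 0 1,
      condProb_0 n π Q hπ hQrow s 0 0,
      condProb_mid n π Q hπ hQpos hQrow s t hst 1 1,
      condProb_mid n π Q hπ hQpos hQrow s t hst 0 1,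
      condExp_site0 n π Q hπ hQrow 0 s (fun x => deriv (fun ε => ℓ (s.1+1) ε x) 0),
      hd1 s]
  rw [hB, hS]
  -- final algebra: combine the two V's and match term by term
  rw [show ∀ A B C A' B' C' : ℝ, (A + B + 2*C) - (A' + B' + 2*C')
      = ((A - A') + (B - B')) + 2*(C - C') from fun _ _ _ _ _ _ => by ring]
  congr 1
  · rw [← Finset.sum_sub_distrib, ← Finset.sum_sub_distrib, ← Finset.sum_add_distrib]
    refine Finset.sum_congr rfl fun t _ => ?_
    exact diag_term n Q hQrow t (fun b => deriv (fun e => ℓ (t.1+1) e b) 0)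
      (fun b => deriv (deriv (fun e => ℓ (t.1+1) e b)) 0)
  · congr 1
    rw [← Finset.sum_sub_distrib]
    refine Finset.sum_congr rfl fun t _ => ?_
    rw [← Finset.sum_sub_distrib]
    refine Finset.sum_congr rfl fun s hs => ?_
    exact cross_term n Q hQrow s t (Finset.mem_filter.mp hs).2
      (fun b => deriv (fun e => ℓ (s.1+1) e b) 0) (fun b => deriv (fun e => ℓ (t.1+1) e b) 0)
end

section
/- Let σ = (σ_0,…,σ_n) be a binary Markov chain as in the context, let 1 ≤ s < t ≤ n, and let g, h : {0,1} → ℝ be arbitrary functions with dg = g(1) − g(0) and dh = h(1) − h(0). Then Cov(g(σ_s), h(σ_t) | σ_0 = 1) − Cov(g(σ_s), h(σ_t) | σ_0 = 0) = D_{0s}[D_{st} P_{0s}(0,0) − D_{0t}] · dg · dh + [D_{0s} D_{st} g(0) − D_{0t} E(g(σ_s) | σ_0 = 0)] · dh. In particular, for 1 ≤ t ≤ n and g : {0,1} → ℝ, Var(g(σ_t) | σ_0 = 1) − Var(g(σ_t) | σ_0 = 0) = D_{0t}[P_{0t}(1,0) − P_{0t}(0,1)] (dg)^2. -/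
set_option linter.unusedSectionVars false


/-- The conditional covariance `Cov(F, G | σ₀ = a)`. -/
noncomputable def condCov (n : ℕ) (π : Fin 2 → ℝ) (Q : ℕ → Fin 2 → Fin 2 → ℝ)
    (a : Fin 2) (F G : (Fin (n + 1) → Fin 2) → ℝ) : ℝ :=
  condExp' n π Q 0 a (fun v => F v * G v) -
    condExp' n π Q 0 a F * condExp' n π Q 0 a G

noncomputable def K (Q : ℕ → Fin 2 → Fin 2 → ℝ) (s : ℕ) : ℕ → Fin 2 → Fin 2 → ℝ
  | 0 => fun a b => if a = b then 1 else 0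
  | k + 1 => fun a c => ∑ b, K Q s k a b * Q (s + k + 1) b c

lemma sum_snoc (m : ℕ) (f : (Fin (m + 2) → Fin 2) → ℝ) :
    ∑ v : Fin (m + 2) → Fin 2, f v
      = ∑ u : Fin (m + 1) → Fin 2, ∑ x : Fin 2, f (Fin.snoc u x) := by
  rw [← (Fin.snocEquiv (fun _ => Fin 2)).sum_comp f, Fintype.sum_prod_type]
  rw [Finset.sum_comm]
  rfl

lemma snoc_zero' (m : ℕ) (u : Fin (m + 1) → Fin 2) (x : Fin 2) :
    (Fin.snoc u x : Fin (m + 2) → Fin 2) 0 = u 0 := by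
  have : (0 : Fin (m + 2)) = Fin.castSucc 0 := rfl
  rw [this, Fin.snoc_castSucc]

lemma pathWeight_snoc (m : ℕ) (π : Fin 2 → ℝ) (Q : ℕ → Fin 2 → Fin 2 → ℝ)
    (u : Fin (m + 1) → Fin 2) (x : Fin 2) :
    pathWeight (m + 1) π Q (Fin.snoc u x)
      = pathWeight m π Q u * Q (m + 1) (u (Fin.last m)) x := by
  unfold pathWeight
  rw [Fin.prod_univ_castSucc]
  have h2 : ∀ i : Fin m,
      (Fin.snoc u x : Fin (m+2) → Fin 2) i.castSucc.castSucc = u i.castSucc :=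
    fun i => by simp
  have h3 : ∀ i : Fin m,
      (Fin.snoc u x : Fin (m+2) → Fin 2) i.castSucc.succ = u i.succ := by
    intro i
    rw [Fin.succ_castSucc]
    rw [Fin.snoc_castSucc]
  have hlast : ∀ i : Fin (m + 1),
      (Fin.snoc u x : Fin (m+2) → Fin 2) i.castSucc = u i := fun i => by simp
  have h4 : (Fin.snoc u x : Fin (m+2) → Fin 2) (Fin.last m).succ = x := by
    have : (Fin.last m).succ = Fin.last (m + 1) := rfl
    rw [this, Fin.snoc_last]
  simp only [snoc_zero', Fin.coe_castSucc, h2, h3, Fin.val_last, hlast, h4]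
  ring

lemma LemA (π : Fin 2 → ℝ) (Q : ℕ → Fin 2 → Fin 2 → ℝ) :
    ∀ (m : ℕ) (a : Fin 2) (F : Fin 2 → ℝ),
    ∑ v : Fin (m + 1) → Fin 2,
        (if v 0 = a then pathWeight m π Q v * F (v (Fin.last m)) else 0)
      = π a * ∑ c, K Q 0 m a c * F c := by
  intro m
  induction m with
  | zero =>
      intro a F
      rw [← ((Equiv.funUnique (Fin 1) (Fin 2)).symm.sum_comp _)]
      simp [pathWeight, K, Fin.sum_univ_two]
  | succ m ih =>
      intro a F
      rw [sum_snoc]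
      simp only [pathWeight_snoc, snoc_zero', Fin.snoc_last]
      have key : ∀ u : Fin (m + 1) → Fin 2,
          (∑ x : Fin 2, if u 0 = a then
              pathWeight m π Q u * Q (m + 1) (u (Fin.last m)) x * F x else 0)
            = (if u 0 = a then pathWeight m π Q u *
                (∑ x, Q (m + 1) (u (Fin.last m)) x * F x) else 0) := by
        intro u
        split
        · rw [Finset.mul_sum]
          exact Finset.sum_congr rfl fun x _ => by ring
        · simp
      simp only [key]
      rw [ih a (fun d => ∑ x, Q (m + 1) d x * F x)]
      simp only [K, Nat.zero_add, Fin.sum_univ_two]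
      ring

lemma LemM (π : Fin 2 → ℝ) (Q : ℕ → Fin 2 → Fin 2 → ℝ)
    (hQrow : ∀ t a, Q t a 0 + Q t a 1 = 1) (m : ℕ) :
    ∀ (n : ℕ) (h : m ≤ n) (G : (Fin (m + 1) → Fin 2) → ℝ),
    ∑ v : Fin (n + 1) → Fin 2,
        pathWeight n π Q v * G (fun i => v (Fin.castLE (by omega) i))
      = ∑ u : Fin (m + 1) → Fin 2, pathWeight m π Q u * G u := by
  intro n h
  induction n, h using Nat.le_induction with
  | base =>
      intro G
      apply Finset.sum_congr rfl
      intro v _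
      have hv : (fun i => v (Fin.castLE (by omega) i)) = v :=
        funext fun i => congrArg v (Fin.ext rfl)
      rw [hv]
  | succ n hmn ih =>
      intro G
      rw [sum_snoc]
      have key : ∀ (u : Fin (n + 1) → Fin 2) (x : Fin 2) (i : Fin (m + 1)),
          (Fin.snoc u x : Fin (n + 2) → Fin 2) (Fin.castLE (by omega) i)
            = u (Fin.castLE (by omega) i) := by
        intro u x i
        have : (Fin.castLE (by omega) i : Fin (n + 2))
            = Fin.castSucc (Fin.castLE (by omega : m + 1 ≤ n + 1) i) := Fin.ext rfl
        rw [this, Fin.snoc_castSucc]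
      simp only [pathWeight_snoc, key]
      have key2 : ∀ u : Fin (n + 1) → Fin 2,
          (∑ x : Fin 2, pathWeight n π Q u * Q (n + 1) (u (Fin.last n)) x *
              G (fun i => u (Fin.castLE (by omega) i)))
            = pathWeight n π Q u * G (fun i => u (Fin.castLE (by omega) i)) := by
        intro u
        rw [Fin.sum_univ_two]
        have := hQrow (n + 1) (u (Fin.last n))
        linear_combination
          (pathWeight n π Q u * G fun i => u (Fin.castLE (by omega) i)) * this
      simp only [key2]
      exact ih G

lemma LemB (π : Fin 2 → ℝ) (Q : ℕ → Fin 2 → Fin 2 → ℝ) (s : ℕ) :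
    ∀ (t : ℕ) (hst : s ≤ t) (a : Fin 2) (g F : Fin 2 → ℝ),
    ∑ v : Fin (t + 1) → Fin 2,
        (if v 0 = a then pathWeight t π Q v *
            (g (v ⟨s, by omega⟩) * F (v (Fin.last t))) else 0)
      = π a * ∑ b, ∑ c, K Q 0 s a b * K Q s (t - s) b c * g b * F c := by
  intro t hst
  induction t, hst using Nat.le_induction with
  | base =>
      intro a g F
      have hpos : (⟨s, by omega⟩ : Fin (s + 1)) = Fin.last s := Fin.ext rfl
      rw [hpos, LemA π Q s a (fun c => g c * F c)]
      simp only [Nat.sub_self, K, Fin.sum_univ_two]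
      norm_num
      try (left; ring)
      try tauto
  | succ t h ih =>
      intro a g F
      rw [sum_snoc]
      have hsp : ∀ (u : Fin (t + 1) → Fin 2) (x : Fin 2),
          (Fin.snoc u x : Fin (t + 2) → Fin 2) ⟨s, by omega⟩
            = u ⟨s, by omega⟩ := by
        intro u x
        have : (⟨s, by omega⟩ : Fin (t + 2))
            = Fin.castSucc (⟨s, by omega⟩ : Fin (t + 1)) := Fin.ext rfl
        rw [this, Fin.snoc_castSucc]
      simp only [pathWeight_snoc, snoc_zero', Fin.snoc_last, hsp]
      have key : ∀ u : Fin (t + 1) → Fin 2,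
          (∑ x : Fin 2, if u 0 = a then
              pathWeight t π Q u * Q (t + 1) (u (Fin.last t)) x *
                (g (u ⟨s, by omega⟩) * F x) else 0)
            = (if u 0 = a then pathWeight t π Q u *
                (g (u ⟨s, by omega⟩) *
                  (∑ x, Q (t + 1) (u (Fin.last t)) x * F x)) else 0) := by
        intro u
        split
        · rw [Finset.mul_sum, Finset.mul_sum]
          exact Finset.sum_congr rfl fun x _ => by ring
        · simp
      simp only [key]
      rw [ih a g (fun d => ∑ x, Q (t + 1) d x * F x)]
      have h1 : t + 1 - s = (t - s) + 1 := by omega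
      have h2 : s + (t - s) + 1 = t + 1 := by omega
      rw [h1]
      simp only [K, h2, Fin.sum_univ_two]
      ring

lemma Krow (Q : ℕ → Fin 2 → Fin 2 → ℝ) (hQrow : ∀ t a, Q t a 0 + Q t a 1 = 1)
    (s k : ℕ) (a : Fin 2) : ∑ b, K Q s k a b = 1 := by
  induction k with
  | zero => simp [K]
  | succ k ih =>
      simp only [K]
      rw [Finset.sum_comm]
      have : ∀ b : Fin 2, ∑ c, K Q s k a b * Q (s + k + 1) b c = K Q s k a b := by
        intro b
        rw [← Finset.mul_sum]
        have := hQrow (s + k + 1) b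
        rw [Fin.sum_univ_two, this, mul_one]
      simp only [this]; exact ih

lemma Knonneg (Q : ℕ → Fin 2 → Fin 2 → ℝ) (hQpos : ∀ t a b, 0 < Q t a b)
    (s k : ℕ) (a b : Fin 2) : 0 ≤ K Q s k a b := by
  induction k generalizing a b with
  | zero => simp only [K]; split <;> norm_num
  | succ k ih =>
      simp only [K]
      exact Finset.sum_nonneg fun c _ => mul_nonneg (ih a c) (hQpos _ _ _).le

lemma Kpos (Q : ℕ → Fin 2 → Fin 2 → ℝ) (hQpos : ∀ t a b, 0 < Q t a b)
    (hQrow : ∀ t a, Q t a 0 + Q t a 1 = 1)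
    (s k : ℕ) (a b : Fin 2) : 0 < K Q s (k + 1) a b := by
  have h0 := Knonneg Q hQpos s k a 0
  have h1 := Knonneg Q hQpos s k a 1
  have hr := Krow Q hQrow s k a
  rw [Fin.sum_univ_two] at hr
  simp only [K, Fin.sum_univ_two]
  rcases h0.eq_or_lt with h | h
  · have hK0 : K Q s k a 0 = 0 := h.symm
    have hK1 : K Q s k a 1 = 1 := by linarith
    rw [hK0, hK1]
    simpa using hQpos (s + k + 1) 1 b
  · nlinarith [mul_pos h (hQpos (s + k + 1) 0 b),
      mul_nonneg h1 (hQpos (s + k + 1) 1 b).le]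

lemma den0 (π : Fin 2 → ℝ) (Q : ℕ → Fin 2 → Fin 2 → ℝ)
    (hQrow : ∀ t a, Q t a 0 + Q t a 1 = 1) (n : ℕ) (a : Fin 2) :
    (∑ v : Fin (n + 1) → Fin 2, if v 0 = a then pathWeight n π Q v else 0) = π a := by
  calc (∑ v : Fin (n + 1) → Fin 2, if v 0 = a then pathWeight n π Q v else 0)
      = ∑ v : Fin (n + 1) → Fin 2, pathWeight n π Q v *
          (fun u : Fin 1 → Fin 2 => if u 0 = a then (1 : ℝ) else 0)
            (fun i => v (Fin.castLE (by omega) i)) := by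
        apply Finset.sum_congr rfl
        intro v _
        simp only []
        have h0 : v (Fin.castLE (by omega : 0 + 1 ≤ n + 1) (0 : Fin 1)) = v 0 :=
          congrArg v (Fin.ext (by simp))
        simp only [h0]
        split <;> simp
    _ = ∑ u : Fin (0 + 1) → Fin 2, pathWeight 0 π Q u * (if u 0 = a then 1 else 0) :=
        LemM π Q hQrow 0 n (by omega) (fun u => if u 0 = a then (1 : ℝ) else 0)
    _ = π a := by
        rw [← (Equiv.funUnique (Fin 1) (Fin 2)).symm.sum_comp]
        simp [pathWeight, Finset.sum_ite_eq]

lemma num2 (π : Fin 2 → ℝ) (Q : ℕ → Fin 2 → Fin 2 → ℝ)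
    (hQrow : ∀ t a, Q t a 0 + Q t a 1 = 1) (n p q : ℕ) (hpq : p ≤ q) (hq : q ≤ n)
    (a : Fin 2) (g h : Fin 2 → ℝ) :
    (∑ v : Fin (n + 1) → Fin 2, if v 0 = a then pathWeight n π Q v *
        (g (v ⟨p, by omega⟩) * h (v ⟨q, by omega⟩)) else 0)
      = π a * ∑ b, ∑ c, K Q 0 p a b * K Q p (q - p) b c * g b * h c := by
  calc (∑ v : Fin (n + 1) → Fin 2, if v 0 = a then pathWeight n π Q v *
        (g (v ⟨p, by omega⟩) * h (v ⟨q, by omega⟩)) else 0)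
      = ∑ v : Fin (n + 1) → Fin 2, pathWeight n π Q v *
          (fun u : Fin (q + 1) → Fin 2 => if u 0 = a then
              g (u ⟨p, by omega⟩) * h (u (Fin.last q)) else 0)
            (fun i => v (Fin.castLE (by omega) i)) := by
        apply Finset.sum_congr rfl
        intro v _
        simp only []
        have e0 : v (Fin.castLE (by omega : q + 1 ≤ n + 1) (0 : Fin (q + 1))) = v 0 :=
          congrArg v (Fin.ext (by simp))
        have ep : v (Fin.castLE (by omega : q + 1 ≤ n + 1) (⟨p, by omega⟩ : Fin (q + 1)))
            = v ⟨p, by omega⟩ := congrArg v (Fin.ext rfl)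
        have eq' : v (Fin.castLE (by omega : q + 1 ≤ n + 1) (Fin.last q))
            = v ⟨q, by omega⟩ := congrArg v (Fin.ext rfl)
        simp only [e0, ep, eq']
        split <;> simp
    _ = ∑ u : Fin (q + 1) → Fin 2, pathWeight q π Q u *
          (if u 0 = a then g (u ⟨p, by omega⟩) * h (u (Fin.last q)) else 0) :=
        LemM π Q hQrow q n hq
          (fun u => if u 0 = a then g (u ⟨p, by omega⟩) * h (u (Fin.last q)) else 0)
    _ = ∑ u : Fin (q + 1) → Fin 2, (if u 0 = a then pathWeight q π Q u *
          (g (u ⟨p, by omega⟩) * h (u (Fin.last q))) else 0) := by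
        apply Finset.sum_congr rfl
        intro u _
        split <;> simp
    _ = π a * ∑ b, ∑ c, K Q 0 p a b * K Q p (q - p) b c * g b * h c :=
        LemB π Q p q hpq a g h

lemma num1 (π : Fin 2 → ℝ) (Q : ℕ → Fin 2 → Fin 2 → ℝ)
    (hQrow : ∀ t a, Q t a 0 + Q t a 1 = 1) (n q : ℕ) (hq : q ≤ n)
    (a : Fin 2) (h : Fin 2 → ℝ) :
    (∑ v : Fin (n + 1) → Fin 2, if v 0 = a then pathWeight n π Q v *
        h (v ⟨q, by omega⟩) else 0)
      = π a * ∑ c, K Q 0 q a c * h c := by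
  calc (∑ v : Fin (n + 1) → Fin 2, if v 0 = a then pathWeight n π Q v *
        h (v ⟨q, by omega⟩) else 0)
      = ∑ v : Fin (n + 1) → Fin 2, pathWeight n π Q v *
          (fun u : Fin (q + 1) → Fin 2 => if u 0 = a then h (u (Fin.last q)) else 0)
            (fun i => v (Fin.castLE (by omega) i)) := by
        apply Finset.sum_congr rfl
        intro v _
        simp only []
        have e0 : v (Fin.castLE (by omega : q + 1 ≤ n + 1) (0 : Fin (q + 1))) = v 0 :=
          congrArg v (Fin.ext (by simp))
        have eq' : v (Fin.castLE (by omega : q + 1 ≤ n + 1) (Fin.last q))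
            = v ⟨q, by omega⟩ := congrArg v (Fin.ext rfl)
        simp only [e0, eq']
        split <;> simp
    _ = ∑ u : Fin (q + 1) → Fin 2, pathWeight q π Q u *
          (if u 0 = a then h (u (Fin.last q)) else 0) :=
        LemM π Q hQrow q n hq (fun u => if u 0 = a then h (u (Fin.last q)) else 0)
    _ = ∑ u : Fin (q + 1) → Fin 2, (if u 0 = a then pathWeight q π Q u *
          h (u (Fin.last q)) else 0) := by
        apply Finset.sum_congr rfl
        intro u _
        split <;> simp
    _ = π a * ∑ c, K Q 0 q a c * h c := LemA π Q q a h

lemma numMid (π : Fin 2 → ℝ) (Q : ℕ → Fin 2 → Fin 2 → ℝ)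
    (hQrow : ∀ t a, Q t a 0 + Q t a 1 = 1) (n p q : ℕ) (hpq : p ≤ q) (hq : q ≤ n)
    (b c : Fin 2) :
    (∑ v : Fin (n + 1) → Fin 2, if v ⟨p, by omega⟩ = b then pathWeight n π Q v *
        (if v ⟨q, by omega⟩ = c then (1 : ℝ) else 0) else 0)
      = ∑ a : Fin 2, π a * (K Q 0 p a b * K Q p (q - p) b c) := by
  calc (∑ v : Fin (n + 1) → Fin 2, if v ⟨p, by omega⟩ = b then pathWeight n π Q v *
        (if v ⟨q, by omega⟩ = c then (1 : ℝ) else 0) else 0)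
      = ∑ v : Fin (n + 1) → Fin 2, ∑ a : Fin 2, if v 0 = a then pathWeight n π Q v *
          ((if v ⟨p, by omega⟩ = b then (1 : ℝ) else 0) *
            (if v ⟨q, by omega⟩ = c then (1 : ℝ) else 0)) else 0 := by
        apply Finset.sum_congr rfl
        intro v _
        rw [show (∑ a : Fin 2, if v 0 = a then pathWeight n π Q v *
          ((if v ⟨p, by omega⟩ = b then (1 : ℝ) else 0) *
            (if v ⟨q, by omega⟩ = c then (1 : ℝ) else 0)) else 0) = pathWeight n π Q v *
          ((if v ⟨p, by omega⟩ = b then (1 : ℝ) else 0) *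
            (if v ⟨q, by omega⟩ = c then (1 : ℝ) else 0)) from by
            simp [Finset.sum_ite_eq]]
        by_cases h1 : v ⟨p, by omega⟩ = b <;> by_cases h2 : v ⟨q, by omega⟩ = c <;>
          simp [h1, h2]
    _ = ∑ a : Fin 2, ∑ v : Fin (n + 1) → Fin 2, if v 0 = a then pathWeight n π Q v *
          ((if v ⟨p, by omega⟩ = b then (1 : ℝ) else 0) *
            (if v ⟨q, by omega⟩ = c then (1 : ℝ) else 0)) else 0 := Finset.sum_comm
    _ = ∑ a : Fin 2, π a * (K Q 0 p a b * K Q p (q - p) b c) := by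
        apply Finset.sum_congr rfl
        intro a _
        rw [num2 π Q hQrow n p q hpq hq a
          (fun x => if x = b then (1 : ℝ) else 0) (fun x => if x = c then (1 : ℝ) else 0)]
        congr 1
        simp [Fin.sum_univ_two]

lemma denMid (π : Fin 2 → ℝ) (Q : ℕ → Fin 2 → Fin 2 → ℝ)
    (hQrow : ∀ t a, Q t a 0 + Q t a 1 = 1) (n p : ℕ) (hp : p ≤ n) (b : Fin 2) :
    (∑ v : Fin (n + 1) → Fin 2, if v ⟨p, by omega⟩ = b then pathWeight n π Q v else 0)
      = ∑ a : Fin 2, π a * K Q 0 p a b := by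
  have := numMid π Q hQrow n p p le_rfl hp b b
  calc (∑ v : Fin (n + 1) → Fin 2, if v ⟨p, by omega⟩ = b then pathWeight n π Q v else 0)
      = (∑ v : Fin (n + 1) → Fin 2, if v ⟨p, by omega⟩ = b then pathWeight n π Q v *
          (if v ⟨p, by omega⟩ = b then (1 : ℝ) else 0) else 0) := by
        apply Finset.sum_congr rfl
        intro v _
        split <;> simp_all
    _ = ∑ a : Fin 2, π a * (K Q 0 p a b * K Q p (p - p) b b) := this
    _ = ∑ a : Fin 2, π a * K Q 0 p a b := by
        apply Finset.sum_congr rfl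
        intro a _
        simp [Nat.sub_self, K]

section evals
variable (π : Fin 2 → ℝ) (Q : ℕ → Fin 2 → Fin 2 → ℝ)
variable (hπ : ∀ a, 0 < π a) (hQpos : ∀ t a b, 0 < Q t a b)
variable (hQrow : ∀ t a, Q t a 0 + Q t a 1 = 1)

include hπ hQpos hQrow in
lemma num1T (n p q : ℕ) (hpq : p ≤ q) (hq : q ≤ n) (a : Fin 2) (h : Fin 2 → ℝ) :
    (∑ v : Fin (n + 1) → Fin 2, if v 0 = a then pathWeight n π Q v *
        h (v ⟨q, by omega⟩) else 0)
      = π a * ∑ b, ∑ c, K Q 0 p a b * K Q p (q - p) b c * h c := by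
  have h2 := num2 π Q hQrow n p q hpq hq a (fun _ => (1 : ℝ)) h
  simp only [one_mul, mul_one] at h2
  exact h2

include hπ hQpos hQrow in
lemma condExp'_two (n p q : ℕ) (hpq : p ≤ q) (hq : q ≤ n) (a : Fin 2) (g h : Fin 2 → ℝ) :
    condExp' n π Q 0 a (fun v => g (v ⟨p, by omega⟩) * h (v ⟨q, by omega⟩))
      = ∑ b, ∑ c, K Q 0 p a b * K Q p (q - p) b c * g b * h c := by
  simp only [condExp']
  rw [num2 π Q hQrow n p q hpq hq a g h, den0 π Q hQrow n a]
  exact mul_div_cancel_left₀ _ (hπ a).ne'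

include hπ hQpos hQrow in
lemma condExp'_one (n q : ℕ) (hq : q ≤ n) (a : Fin 2) (g : Fin 2 → ℝ) :
    condExp' n π Q 0 a (fun v => g (v ⟨q, by omega⟩)) = ∑ c, K Q 0 q a c * g c := by
  simp only [condExp']
  rw [num1 π Q hQrow n q hq a g, den0 π Q hQrow n a]
  exact mul_div_cancel_left₀ _ (hπ a).ne'

include hπ hQpos hQrow in
lemma condExp'_oneT (n p q : ℕ) (hpq : p ≤ q) (hq : q ≤ n) (a : Fin 2) (h : Fin 2 → ℝ) :
    condExp' n π Q 0 a (fun v => h (v ⟨q, by omega⟩))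
      = ∑ b, ∑ c, K Q 0 p a b * K Q p (q - p) b c * h c := by
  simp only [condExp']
  rw [num1T π Q hπ hQpos hQrow n p q hpq hq a h, den0 π Q hQrow n a]
  exact mul_div_cancel_left₀ _ (hπ a).ne'

include hπ hQpos hQrow in
lemma condProb_0_s12 (n q : ℕ) (hq : q ≤ n) (a b : Fin 2) :
    condProb n π Q 0 ⟨q, by omega⟩ a b = K Q 0 q a b := by
  simp only [condProb, condExp']
  rw [num1 π Q hQrow n q hq a (fun x => if x = b then (1 : ℝ) else 0),
    den0 π Q hQrow n a]
  rw [mul_div_cancel_left₀ _ (hπ a).ne']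
  simp [Fin.sum_univ_two]

include hπ hQpos hQrow in
lemma condProb_0T (n p q : ℕ) (hpq : p ≤ q) (hq : q ≤ n) (a c : Fin 2) :
    condProb n π Q 0 ⟨q, by omega⟩ a c
      = ∑ b, K Q 0 p a b * K Q p (q - p) b c := by
  simp only [condProb, condExp']
  rw [num1T π Q hπ hQpos hQrow n p q hpq hq a (fun x => if x = c then (1 : ℝ) else 0),
    den0 π Q hQrow n a]
  rw [mul_div_cancel_left₀ _ (hπ a).ne']
  simp [Fin.sum_univ_two]

include hπ hQpos hQrow in
lemma condProb_mid_s12 (n p q : ℕ) (hpq : p + 1 ≤ q) (hq : q ≤ n) (b c : Fin 2) :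
    condProb n π Q ⟨p + 1, by omega⟩ ⟨q, by omega⟩ b c
      = K Q (p + 1) (q - (p + 1)) b c := by
  simp only [condProb, condExp']
  rw [numMid π Q hQrow n (p + 1) q hpq hq b c, denMid π Q hQrow n (p + 1) (by omega) b]
  have hpos : 0 < ∑ a : Fin 2, π a * K Q 0 (p + 1) a b := by
    rw [Fin.sum_univ_two]
    have := Kpos Q hQpos hQrow 0 p 0 b
    have := Kpos Q hQpos hQrow 0 p 1 b
    nlinarith [hπ 0, hπ 1]
  rw [div_eq_iff hpos.ne']
  rw [Fin.sum_univ_two, Fin.sum_univ_two]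
  ring

end evals

/-- For a binary Markov chain `σ = (σ₀,…,σ_n)` as above,
`1 ≤ s < t ≤ n`, and arbitrary `g, h : {0,1} → ℝ` (with `dg = g 1 − g 0`,
`dh = h 1 − h 0`),
`Cov(g(σ_s), h(σ_t) | σ₀=1) − Cov(g(σ_s), h(σ_t) | σ₀=0) =
  D_{0s}[D_{st} P_{0s}(0,0) − D_{0t}] dg dh +
  [D_{0s} D_{st} g(0) − D_{0t} E(g(σ_s)|σ₀=0)] dh`;
in particular, for `1 ≤ t ≤ n`,
`Var(g(σ_t)|σ₀=1) − Var(g(σ_t)|σ₀=0) = D_{0t}[P_{0t}(1,0) − P_{0t}(0,1)] dg²`. -/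
theorem stmt12 (n : ℕ) (π : Fin 2 → ℝ) (Q : ℕ → Fin 2 → Fin 2 → ℝ)
    (hπ : ∀ a, 0 < π a) (hπsum : π 0 + π 1 = 1)
    (hQpos : ∀ t a b, 0 < Q t a b) (hQrow : ∀ t a, Q t a 0 + Q t a 1 = 1) :
    (∀ s t : Fin n, s < t → ∀ g h : Fin 2 → ℝ,
      condCov n π Q 1 (fun v => g (v s.succ)) (fun v => h (v t.succ)) -
          condCov n π Q 0 (fun v => g (v s.succ)) (fun v => h (v t.succ)) =
        Dst n π Q 0 s.succ *
            (Dst n π Q s.succ t.succ * condProb n π Q 0 s.succ 0 0 -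
              Dst n π Q 0 t.succ) * (g 1 - g 0) * (h 1 - h 0) +
          (Dst n π Q 0 s.succ * Dst n π Q s.succ t.succ * g 0 -
              Dst n π Q 0 t.succ * condExp' n π Q 0 0 fun v => g (v s.succ)) *
            (h 1 - h 0)) ∧
    ∀ t : Fin n, ∀ g : Fin 2 → ℝ,
      condCov n π Q 1 (fun v => g (v t.succ)) (fun v => g (v t.succ)) -
          condCov n π Q 0 (fun v => g (v t.succ)) (fun v => g (v t.succ)) =
        Dst n π Q 0 t.succ *
          (condProb n π Q 0 t.succ 1 0 - condProb n π Q 0 t.succ 0 1) *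
          (g 1 - g 0) ^ 2 := by
  constructor
  · intro s t hst g h
    have hstv : s.1 < t.1 := hst
    have hTn : t.1 + 1 ≤ n := t.2
    have hSn : s.1 + 1 ≤ n := by omega
    have hST : s.1 + 1 ≤ t.1 + 1 := by omega
    have hsuccS : s.succ = (⟨s.1 + 1, by omega⟩ : Fin (n + 1)) := rfl
    have hsuccT : t.succ = (⟨t.1 + 1, by omega⟩ : Fin (n + 1)) := rfl
    simp only [hsuccS, hsuccT, condCov, Dst]
    rw [condExp'_two π Q hπ hQpos hQrow n (s.1 + 1) (t.1 + 1) hST hTn 1 g h,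
      condExp'_two π Q hπ hQpos hQrow n (s.1 + 1) (t.1 + 1) hST hTn 0 g h,
      condExp'_one π Q hπ hQpos hQrow n (s.1 + 1) hSn 1 g,
      condExp'_one π Q hπ hQpos hQrow n (s.1 + 1) hSn 0 g,
      condExp'_oneT π Q hπ hQpos hQrow n (s.1 + 1) (t.1 + 1) hST hTn 1 h,
      condExp'_oneT π Q hπ hQpos hQrow n (s.1 + 1) (t.1 + 1) hST hTn 0 h,
      condProb_0_s12 π Q hπ hQpos hQrow n (s.1 + 1) hSn 1 1,
      condProb_0_s12 π Q hπ hQpos hQrow n (s.1 + 1) hSn 0 1,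
      condProb_0_s12 π Q hπ hQpos hQrow n (s.1 + 1) hSn 0 0,
      condProb_0T π Q hπ hQpos hQrow n (s.1 + 1) (t.1 + 1) hST hTn 1 1,
      condProb_0T π Q hπ hQpos hQrow n (s.1 + 1) (t.1 + 1) hST hTn 0 1,
      condProb_mid_s12 π Q hπ hQpos hQrow n s.1 (t.1 + 1) hST hTn 1 1,
      condProb_mid_s12 π Q hπ hQpos hQrow n s.1 (t.1 + 1) hST hTn 0 1]
    have hA0 : K Q 0 (s.1 + 1) 0 0 = 1 - K Q 0 (s.1 + 1) 0 1 := by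
      have := Krow Q hQrow 0 (s.1 + 1) 0
      rw [Fin.sum_univ_two] at this; linarith
    have hA1 : K Q 0 (s.1 + 1) 1 0 = 1 - K Q 0 (s.1 + 1) 1 1 := by
      have := Krow Q hQrow 0 (s.1 + 1) 1
      rw [Fin.sum_univ_two] at this; linarith
    have hB0 : K Q (s.1 + 1) (t.1 + 1 - (s.1 + 1)) 0 0
        = 1 - K Q (s.1 + 1) (t.1 + 1 - (s.1 + 1)) 0 1 := by
      have := Krow Q hQrow (s.1 + 1) (t.1 + 1 - (s.1 + 1)) 0
      rw [Fin.sum_univ_two] at this; linarith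
    have hB1 : K Q (s.1 + 1) (t.1 + 1 - (s.1 + 1)) 1 0
        = 1 - K Q (s.1 + 1) (t.1 + 1 - (s.1 + 1)) 1 1 := by
      have := Krow Q hQrow (s.1 + 1) (t.1 + 1 - (s.1 + 1)) 1
      rw [Fin.sum_univ_two] at this; linarith
    simp only [Fin.sum_univ_two, hA0, hA1, hB0, hB1]
    ring
  · intro t g
    have hTn : t.1 + 1 ≤ n := t.2
    have hsuccT : t.succ = (⟨t.1 + 1, by omega⟩ : Fin (n + 1)) := rfl
    simp only [hsuccT, condCov, Dst]
    rw [condExp'_two π Q hπ hQpos hQrow n (t.1 + 1) (t.1 + 1) le_rfl hTn 1 g g,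
      condExp'_two π Q hπ hQpos hQrow n (t.1 + 1) (t.1 + 1) le_rfl hTn 0 g g,
      condExp'_one π Q hπ hQpos hQrow n (t.1 + 1) hTn 1 g,
      condExp'_one π Q hπ hQpos hQrow n (t.1 + 1) hTn 0 g,
      condProb_0_s12 π Q hπ hQpos hQrow n (t.1 + 1) hTn 1 1,
      condProb_0_s12 π Q hπ hQpos hQrow n (t.1 + 1) hTn 0 1,
      condProb_0_s12 π Q hπ hQpos hQrow n (t.1 + 1) hTn 1 0]
    have hA0 : K Q 0 (t.1 + 1) 0 0 = 1 - K Q 0 (t.1 + 1) 0 1 := by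
      have := Krow Q hQrow 0 (t.1 + 1) 0
      rw [Fin.sum_univ_two] at this; linarith
    have hA1 : K Q 0 (t.1 + 1) 1 0 = 1 - K Q 0 (t.1 + 1) 1 1 := by
      have := Krow Q hQrow 0 (t.1 + 1) 1
      rw [Fin.sum_univ_two] at this; linarith
    have hKzero : ∀ b c : Fin 2, K Q (t.1 + 1) 0 b c = if b = c then (1 : ℝ) else 0 :=
      fun b c => rfl
    simp only [Nat.sub_self, hKzero, Fin.sum_univ_two, hA0, hA1]
    norm_num
    ring
end

section
/- Let n ≥ 1, let q_1,…,q_n ∈ [0,1], and let α ∈ (0,1). Let q_(1) ≤ q_(2) ≤ … ≤ q_(n) be the values sorted in nondecreasing order, and let r = max{ j ∈ {0,1,…,n} : q_(1)+⋯+q_(j) ≤ αj } (with the convention that the empty sum is 0, so r ≥ 0 is well defined). Then for every subset S ⊆ {1,…,n} satisfying Σ_{i∈S} q_i ≤ α·#S, one has #S − Σ_{i∈S} q_i ≤ r − (q_(1)+⋯+q_(r)). In particular, any set consisting of indices realizing the r smallest values q_(1),…,q_(r) satisfies the constraint and attains the maximum of #S − Σ_{i∈S} q_i over all subsets S with Σ_{i∈S}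 q_i ≤ α·#S. -/
lemma filter_lt_eq_map {n k : ℕ} (hkn : k ≤ n) :
    Finset.univ.filter (fun i : Fin n => (i : ℕ) < k)
      = Finset.map (Fin.castLEEmb hkn) Finset.univ := by
  ext i
  simp only [Finset.mem_filter, Finset.mem_univ, true_and, Finset.mem_map]
  constructor
  · intro h
    exact ⟨⟨(i : ℕ), h⟩, by simp [Fin.castLEEmb, Fin.ext_iff]⟩
  · rintro ⟨j, rfl⟩
    simpa [Fin.castLEEmb] using j.isLt

/-- Sum of the first `A.card` values of a monotone function is at most the sum over `A`. -/
lemma prefix_sum_le {n : ℕ} (f : Fin n → ℝ) (hf : Monotone f) (A : Finset (Fin n)) :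
    (∑ i : Fin n, if (i : ℕ) < A.card then f i else 0) ≤ ∑ i ∈ A, f i := by
  set k := A.card with hk
  have hkn : k ≤ n := by simpa using A.card_le_univ
  set e := A.orderIsoOfFin hk.symm with he
  have hle : ∀ m (hm : m < k), m ≤ ((e ⟨m, hm⟩ : Fin n) : ℕ) := by
    intro m
    induction m with
    | zero => intro _; exact Nat.zero_le _
    | succ p ih =>
      intro hm
      have hp : p < k := Nat.lt_of_succ_lt hm
      have h2 : ((e ⟨p, hp⟩ : Fin n) : ℕ) < ((e ⟨p + 1, hm⟩ : Fin n) : ℕ) :=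
        Subtype.coe_lt_coe.mpr (e.strictMono (by simp [Fin.lt_def]))
      have h1 := ih hp
      omega
  have hL : (∑ i : Fin n, if (i : ℕ) < k then f i else 0)
      = ∑ i : Fin k, f (Fin.castLE hkn i) := by
    rw [← Finset.sum_filter, filter_lt_eq_map hkn, Finset.sum_map]
    rfl
  have hR : (∑ i ∈ A, f i) = ∑ i : Fin k, f (e i) := by
    rw [← Finset.sum_attach A f]
    exact Fintype.sum_equiv e.toEquiv.symm _ _ (by simp)
  rw [hL, hR]
  apply Finset.sum_le_sum
  intro i _
  apply hf
  rw [Fin.le_def]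
  simpa using hle i.1 i.isLt

/-- Let `n ≥ 1`, `q₁,…,q_n ∈ [0,1]`, `α ∈ (0,1)`.  Let `σ` be a
permutation sorting the `q_i` in nondecreasing order, `F j = q_(1) + ⋯ + q_(j)` the
partial sums of the sorted values, and `r = max{ j ≤ n : F j ≤ α j }`.  Then every
subset `S ⊆ {1,…,n}` with `∑_{i∈S} q i ≤ α · #S` satisfies
`#S − ∑_{i∈S} q i ≤ r − F r`; and the set of indices realizing the `r` smallest
values satisfies the constraint and attains this maximum. -/
theorem stmt14 (n : ℕ) (hn : 1 ≤ n) (q : Fin n → ℝ)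
    (hq : ∀ i, q i ∈ Set.Icc (0 : ℝ) 1) (α : ℝ) (hα : α ∈ Set.Ioo (0 : ℝ) 1)
    (σ : Equiv.Perm (Fin n)) (hσ : Monotone fun i => q (σ i))
    (F : ℕ → ℝ) (hF : ∀ j, F j = ∑ i : Fin n, if (i : ℕ) < j then q (σ i) else 0)
    (r : ℕ) (hrn : r ≤ n) (hrle : F r ≤ α * r)
    (hrmax : ∀ j, j ≤ n → F j ≤ α * j → j ≤ r) :
    (∀ S : Finset (Fin n), (∑ i ∈ S, q i) ≤ α * S.card →
      (S.card : ℝ) - ∑ i ∈ S, q i ≤ (r : ℝ) - F r) ∧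
    (∑ i ∈ (Finset.univ.filter fun j : Fin n => (j : ℕ) < r).image σ, q i) ≤
        α * ((Finset.univ.filter fun j : Fin n => (j : ℕ) < r).image σ).card ∧
    (((Finset.univ.filter fun j : Fin n => (j : ℕ) < r).image σ).card : ℝ) -
        ∑ i ∈ (Finset.univ.filter fun j : Fin n => (j : ℕ) < r).image σ, q i =
      (r : ℝ) - F r := by
  -- successor formula for F
  have hstep : ∀ j (hj : j < n), F (j + 1) = F j + q (σ ⟨j, hj⟩) := by
    intro j hj
    rw [hF, hF]
    have : ∀ i : Fin n, (if (i : ℕ) < j + 1 then q (σ i) else 0)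
        = (if (i : ℕ) < j then q (σ i) else 0) + (if i = ⟨j, hj⟩ then q (σ i) else 0) := by
      intro i
      rcases lt_trichotomy (i : ℕ) j with h | h | h
      · simp [h, Nat.lt_succ_of_lt h, Fin.ext_iff, Nat.ne_of_lt h]
      · simp [h, Fin.ext_iff]
      · simp [Nat.lt_irrefl, not_lt.mpr (show j + 1 ≤ (i : ℕ) from h), not_lt.mpr (Nat.le_of_lt h), Fin.ext_iff,
          (Nat.ne_of_gt h)]
    rw [Finset.sum_congr rfl (fun i _ => this i), Finset.sum_add_distrib,
      Finset.sum_ite_eq' Finset.univ (⟨j, hj⟩ : Fin n)]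
    simp
  -- gap bound : F (k+m) ≤ F k + m
  have hgap : ∀ k m, k + m ≤ n → F (k + m) ≤ F k + m := by
    intro k m
    induction m with
    | zero => simp
    | succ p ih =>
      intro h
      have hp : k + p < n := by omega
      have hq1 := (hq (σ ⟨k + p, hp⟩)).2
      have hih := ih (by omega)
      rw [show k + (p + 1) = (k + p) + 1 from rfl, hstep (k + p) hp]
      push_cast at hih ⊢
      linarith
  -- facts about the optimal set
  set T := (Finset.univ.filter fun j : Fin n => (j : ℕ) < r).image σ with hT
  have hcardfilter : (Finset.univ.filter fun j : Fin n => (j : ℕ) < r).card = r := by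
    rw [filter_lt_eq_map hrn, Finset.card_map]
    simp
  have hcardT : T.card = r := by
    rw [hT, Finset.card_image_of_injective _ σ.injective, hcardfilter]
  have hsumT : (∑ i ∈ T, q i) = F r := by
    rw [hT, Finset.sum_image (fun a _ b _ h => σ.injective h), hF, ← Finset.sum_filter]
  refine ⟨?_, ?_, ?_⟩
  · intro S hS
    set k := S.card with hk
    have hkn : k ≤ n := by simpa using S.card_le_univ
    have hFk : F k ≤ ∑ i ∈ S, q i := by
      have hA : (S.image σ.symm).card = k := by
        rw [Finset.card_image_of_injective _ σ.symm.injective, hk]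
      have h := prefix_sum_le (fun i => q (σ i)) hσ (S.image σ.symm)
      rw [hA] at h
      rw [hF]
      calc (∑ i : Fin n, if (i : ℕ) < k then q (σ i) else 0)
          ≤ ∑ i ∈ S.image σ.symm, q (σ i) := h
        _ = ∑ i ∈ S, q i := by
            rw [Finset.sum_image (fun a _ b _ h => σ.symm.injective h)]
            simp
    have hkr : k ≤ r := hrmax k hkn (le_trans hFk hS)
    have hbound : F r ≤ F k + ((r : ℝ) - k) := by
      have h := hgap k (r - k) (by omega)
      rw [show k + (r - k) = r by omega] at h
      rw [Nat.cast_sub hkr] at h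
      linarith
    linarith
  · rw [hsumT, hcardT]; exact hrle
  · rw [hsumT, hcardT]
end

section
/- Let Z be a real random variable on a probability space, let φ : ℝ × ℝ → ℝ with v ↦ φ(z,v) differentiable, and let f : ℝ × ℝ → (0,∞) be such that for each v, the law of φ(Z,v) has density x ↦ f(x,v) with respect to Lebesgue measure. Let λ(x,θ) = ln f(x,θ) be twice continuously differentiable, and set s(x) = (∂λ/∂θ)(x,0) and X = φ(Z,0). Assume: (i) the map v ↦ E[s(φ(Z,v))] is differentiable at v = 0 with derivative E[(∂²λ/∂x∂θ)(X,0) · (∂φ/∂v)(Z,0)] (interchange of differentiation and expectation is valid); (ii) the map v ↦ ∫ s(x) f(x,v) dx is differentiable at v = 0 with derivative ∫ s(x) (∂f/∂θ)(x,0) dx (differentiation under the integral sign is valid), and all displayed integrals are finite. Then E[(∂²λ/∂x∂θ)(X,0) · (∂φ/∂v)(Z,0)] = ∫ ((∂f/∂θ)(x,0))² / f(x,0) dx, the Fisher information J(0) of the parametric family f(·,θ) at θ = 0. -/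
open MeasureTheory

/-- Let `Z` be a real random variable, `φ(z,·)` differentiable,
`f(·,v) > 0` a density of the law of `φ(Z,v)` for each `v`, and
`λ(x,θ) = ln f(x,θ)` twice continuously differentiable; set
`s(x) = (∂λ/∂θ)(x,0)` and `X = φ(Z,0)`.  Assuming the interchanges of differentiation
with expectation (i) and with the integral (ii) are valid, and that the displayed
integrals are finite, one has
`E[(∂²λ/∂x∂θ)(X,0) · (∂φ/∂v)(Z,0)] = ∫ ((∂f/∂θ)(x,0))² / f(x,0) dx = J(0)`,
the Fisher information of the family `f(·,θ)` at `θ = 0`. -/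
theorem stmt17 {Ω : Type*} [MeasurableSpace Ω] (μ : Measure Ω)
    [IsProbabilityMeasure μ]
    (Z : Ω → ℝ) (hZ : Measurable Z)
    (phi : ℝ → ℝ → ℝ) (hphi : ∀ z, Differentiable ℝ (phi z))
    (f : ℝ → ℝ → ℝ) (hf : ∀ x v, 0 < f x v)
    (hdens : ∀ v, Measure.map (fun ω => phi (Z ω) v) μ =
      MeasureTheory.volume.withDensity fun x => ENNReal.ofReal (f x v))
    (hlam : ContDiff ℝ 2 (Function.uncurry fun x th => Real.log (f x th)))
    (hi : HasDerivAt
      (fun v => ∫ ω, deriv (fun th => Real.log (f (phi (Z ω) v) th)) 0 ∂μ)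
      (∫ ω, deriv (fun x => deriv (fun th => Real.log (f x th)) 0) (phi (Z ω) 0) *
        deriv (phi (Z ω)) 0 ∂μ) 0)
    (hii : HasDerivAt
      (fun v => ∫ x, deriv (fun th => Real.log (f x th)) 0 * f x v)
      (∫ x, deriv (fun th => Real.log (f x th)) 0 * deriv (fun th => f x th) 0) 0)
    (hint1 : Integrable (fun ω =>
      deriv (fun x => deriv (fun th => Real.log (f x th)) 0) (phi (Z ω) 0) *
        deriv (phi (Z ω)) 0) μ)
    (hint2 : Integrable fun x =>
      deriv (fun th => Real.log (f x th)) 0 * deriv (fun th => f x th) 0)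
    (hint3 : Integrable fun x => (deriv (fun th => f x th) 0) ^ 2 / f x 0) :
    ∫ ω, deriv (fun x => deriv (fun th => Real.log (f x th)) 0) (phi (Z ω) 0) *
        deriv (phi (Z ω)) 0 ∂μ =
      ∫ x, (deriv (fun th => f x th) 0) ^ 2 / f x 0 := by
  set lam : ℝ × ℝ → ℝ := Function.uncurry fun x th => Real.log (f x th) with hlamdef
  set s : ℝ → ℝ := fun x => deriv (fun th => Real.log (f x th)) 0 with hsdef
  -- HasDerivAt for the partial map th ↦ log (f x th)
  have hpart : ∀ x : ℝ, HasDerivAt (fun th => Real.log (f x th))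
      (fderiv ℝ lam (x, 0) (0, 1)) 0 := by
    intro x
    have hinner : HasDerivAt (fun th : ℝ => ((x, th) : ℝ × ℝ)) (0, 1) 0 :=
      (hasDerivAt_const (x := (0:ℝ)) (c := x)).prodMk (hasDerivAt_id 0)
    have houter : HasFDerivAt lam (fderiv ℝ lam (x, 0)) (x, 0) :=
      (hlam.differentiable (by norm_num) (x, 0)).hasFDerivAt
    exact houter.comp_hasDerivAt 0 hinner
  have hsval : ∀ x, s x = fderiv ℝ lam (x, 0) (0, 1) := fun x => (hpart x).deriv
  -- s continuous
  have hscont : Continuous s := by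
    have h1 : Continuous fun x : ℝ => fderiv ℝ lam (x, 0) :=
      (hlam.continuous_fderiv (by norm_num)).comp
        (continuous_id.prodMk continuous_const)
    have h2 : Continuous fun x : ℝ => fderiv ℝ lam (x, 0) (0, 1) :=
      (ContinuousLinearMap.apply ℝ ℝ ((0:ℝ), (1:ℝ))).continuous.comp h1
    simpa [funext hsval] using h2
  -- f(·,v) continuous: f x v = exp (lam (x,v))
  have hfexp : ∀ x v, f x v = Real.exp (lam (x, v)) := by
    intro x v
    simp [hlamdef, Function.uncurry, Real.exp_log (hf x v)]
  have hfcont : ∀ v, Continuous fun x => f x v := by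
    intro v
    have : Continuous fun x : ℝ => Real.exp (lam (x, v)) :=
      Real.continuous_exp.comp (hlam.continuous.comp
        (continuous_id.prodMk continuous_const))
    simpa [← hfexp] using this
  -- key: E[s(φ(Z,v))] = ∫ s x * f x v
  have key : ∀ v, (∫ ω, s (phi (Z ω) v) ∂μ) = ∫ x, s x * f x v := by
    intro v
    have hmap : AEMeasurable (fun ω => phi (Z ω) v) μ := by
      by_contra h
      have h0 := Measure.map_of_not_aemeasurable h
      rw [hdens v] at h0
      have : (MeasureTheory.volume.withDensity fun x => ENNReal.ofReal (f x v))
          Set.univ = 0 := by rw [h0]; simp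
      rw [withDensity_apply _ MeasurableSet.univ] at this
      have hpos : 0 < ∫⁻ x in Set.univ, ENNReal.ofReal (f x v) := by
        rw [Measure.restrict_univ, lintegral_pos_iff_support]
        · have : Function.support (fun x => ENNReal.ofReal (f x v)) = Set.univ := by
            ext x
            simp [Function.support, ENNReal.ofReal_pos, hf x v]
          rw [this]; simp [Real.volume_univ]
        · exact (ENNReal.measurable_ofReal.comp (hfcont v).measurable)
      exact hpos.ne' this
    calc ∫ ω, s (phi (Z ω) v) ∂μ
        = ∫ x, s x ∂(Measure.map (fun ω => phi (Z ω) v) μ) :=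
          (integral_map hmap hscont.aestronglyMeasurable).symm
      _ = ∫ x, s x ∂(MeasureTheory.volume.withDensity fun x => ENNReal.ofReal (f x v)) := by
          rw [hdens v]
      _ = ∫ x, (f x v).toNNReal • s x := by
          have hden : (fun x => ENNReal.ofReal (f x v))
              = fun x => ((f x v).toNNReal : ENNReal) := rfl
          rw [hden, integral_withDensity_eq_integral_smul
            ((hfcont v).measurable.real_toNNReal)]
      _ = ∫ x, s x * f x v := by
          congr 1; funext x
          rw [NNReal.smul_def, smul_eq_mul, Real.coe_toNNReal _ (hf x v).le, mul_comm]
  -- the two functions of v are equal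
  have hfun : (fun v => ∫ ω, s (phi (Z ω) v) ∂μ)
      = fun v => ∫ x, s x * f x v := funext key
  have hi' : HasDerivAt (fun v => ∫ x, s x * f x v)
      (∫ ω, deriv (fun x => deriv (fun th => Real.log (f x th)) 0) (phi (Z ω) 0) *
        deriv (phi (Z ω)) 0 ∂μ) 0 := by
    rw [← hfun]; exact hi
  have huniq := hi'.unique hii
  rw [huniq]
  -- pointwise: s x * deriv f = (deriv f)^2 / f
  congr 1; funext x
  have hd : HasDerivAt (fun th => Real.log (f x th)) (s x) 0 := by
    rw [hsval x]; exact hpart x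
  have hde : HasDerivAt (fun th => Real.exp (Real.log (f x th)))
      (Real.exp (Real.log (f x 0)) * s x) 0 := hd.exp
  have hdf : HasDerivAt (fun th => f x th) (f x 0 * s x) 0 := by
    have he : (fun th => Real.exp (Real.log (f x th))) = fun th => f x th := by
      funext th; exact Real.exp_log (hf x th)
    rw [← Real.exp_log (hf x 0), ← he]
    exact hde
  rw [hdf.deriv]
  have hne : f x 0 ≠ 0 := (hf x 0).ne'
  field_simp
  ring
end

section
/- Let q ≥ 1 be an integer, γ ∈ (0,1), α > 0, c_1,…,c_q ≥ 1, and let (v_n)_{n≥1} be a nondecreasing sequence of reals with v_n ≥ 1. Suppose nonnegative reals a_{n,l} (n ≥ 1, 0 ≤ l ≤ q) satisfy: a_{n,0} ≤ α γ^n for all n ≥ 1; a_{1,l} = 0 for all 1 ≤ l ≤ q; and a_{n+1,l} ≤ γ a_{n,l} + c_l v_n^l Σ_{i=0}^{l−1} a_{n,i} for all n ≥ 1 and 1 ≤ l ≤ q. Then for all n ≥ 1 and 1 ≤ l ≤ q, a_{n+1,l} ≤ α γ^{max(n+1−l, 1)} · n c_l v_n^l · ∏_{i=1}^{l−1} (1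 + n c_i v_n^i). -/
/-- Telescoping identity. -/
lemma stmt18_tele (f : ℕ → ℝ) (k : ℕ) :
    ∏ i ∈ Finset.Icc 1 k, (1 + f i)
      = 1 + ∑ i ∈ Finset.range k, f (i + 1) * ∏ j ∈ Finset.Icc 1 i, (1 + f j) := by
  induction k with
  | zero => simp
  | succ k ih =>
    rw [← Finset.insert_Icc_right_eq_Icc_add_one (by omega), Finset.prod_insert (by simp),
      Finset.sum_range_succ, ih]
    ring

lemma stmt18_one_le_prod (s : Finset ℕ) (f : ℕ → ℝ) (h : ∀ i ∈ s, 1 ≤ f i) :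
    1 ≤ ∏ i ∈ s, f i := by
  calc (1:ℝ) = ∏ _i ∈ s, 1 := by simp
    _ ≤ ∏ i ∈ s, f i := Finset.prod_le_prod (by simp) h

/-- Let `q ≥ 1`, `γ ∈ (0,1)`, `α > 0`, `c₁,…,c_q ≥ 1`, and
`(v_n)_{n ≥ 1}` nondecreasing with `v_n ≥ 1`.  Suppose nonnegative reals `a_{n,l}`
satisfy `a_{n,0} ≤ α γⁿ`, `a_{1,l} = 0` for `1 ≤ l ≤ q`, and
`a_{n+1,l} ≤ γ a_{n,l} + c_l v_nˡ ∑_{i=0}^{l−1} a_{n,i}` for `n ≥ 1`, `1 ≤ l ≤ q`.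
Then for all `n ≥ 1` and `1 ≤ l ≤ q`,
`a_{n+1,l} ≤ α γ^{max(n+1−l,1)} · n c_l v_nˡ · ∏_{i=1}^{l−1} (1 + n c_i v_nⁱ)`. -/
theorem stmt18 (q : ℕ) (hq : 1 ≤ q) (γ α : ℝ) (hγ : γ ∈ Set.Ioo (0 : ℝ) 1)
    (hα : 0 < α)
    (c : ℕ → ℝ) (hc : ∀ l, 1 ≤ l → l ≤ q → 1 ≤ c l)
    (v : ℕ → ℝ) (hv1 : ∀ n, 1 ≤ n → 1 ≤ v n)
    (hvmono : ∀ m n, 1 ≤ m → m ≤ n → v m ≤ v n)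
    (a : ℕ → ℕ → ℝ) (ha0 : ∀ n l, 1 ≤ n → l ≤ q → 0 ≤ a n l)
    (hbase : ∀ n, 1 ≤ n → a n 0 ≤ α * γ ^ n)
    (hinit : ∀ l, 1 ≤ l → l ≤ q → a 1 l = 0)
    (hrec : ∀ n l, 1 ≤ n → 1 ≤ l → l ≤ q →
      a (n + 1) l ≤ γ * a n l + c l * v n ^ l * ∑ i ∈ Finset.range l, a n i) :
    ∀ n l, 1 ≤ n → 1 ≤ l → l ≤ q →
      a (n + 1) l ≤ α * γ ^ max (n + 1 - l) 1 * ((n : ℝ) * c l * v n ^ l) *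
        ∏ i ∈ Finset.Icc 1 (l - 1), (1 + (n : ℝ) * c i * v n ^ i) := by
  obtain ⟨hγ0, hγ1⟩ := hγ
  have hγle : (0:ℝ) ≤ γ := hγ0.le
  intro n
  induction n with
  | zero => intro l h1; exact absurd h1 (by omega)
  | succ m ih =>
    rcases Nat.eq_zero_or_pos m with hm | hm
    · -- base case n = 1
      subst hm
      intro l _ hl hlq
      simp only [Nat.zero_add, Nat.cast_one]
      have hc1 : 1 ≤ c l := hc l hl hlq
      have hvl : 1 ≤ v 1 := hv1 1 le_rfl
      have hvp : (0:ℝ) < v 1 ^ l := by positivity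
      have hsum : ∑ i ∈ Finset.range l, a 1 i ≤ α * γ := by
        obtain ⟨k, rfl⟩ : ∃ k, l = k + 1 := ⟨l - 1, by omega⟩
        rw [Finset.sum_range_succ']
        have hz : ∑ i ∈ Finset.range k, a 1 (i + 1) = 0 := by
          apply Finset.sum_eq_zero
          intro i hi
          exact hinit (i + 1) (by omega) (by simp at hi; omega)
        rw [hz, zero_add]
        simpa using hbase 1 le_rfl
      have h1 := hrec 1 l le_rfl hl hlq
      rw [hinit l hl hlq, mul_zero, zero_add] at h1
      have hmax : max (1 + 1 - l) 1 = 1 := by omega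
      rw [hmax, pow_one]
      have hP : (1:ℝ) ≤ ∏ i ∈ Finset.Icc 1 (l - 1), (1 + (1:ℝ) * c i * v 1 ^ i) := by
        apply stmt18_one_le_prod
        intro i hi
        simp only [Finset.mem_Icc] at hi
        have hci : 1 ≤ c i := hc i hi.1 (by omega)
        have hvip : (0:ℝ) ≤ v 1 ^ i := by positivity
        have : (0:ℝ) ≤ (1:ℝ) * c i * v 1 ^ i := by
          rw [one_mul]; exact mul_nonneg (by linarith) hvip
        linarith
      have hXnn : (0:ℝ) ≤ α * γ * ((1:ℝ) * c l * v 1 ^ l) := by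
        rw [one_mul]
        exact mul_nonneg (mul_nonneg hα.le hγle) (mul_nonneg (by linarith) hvp.le)
      have hcvnn : (0:ℝ) ≤ c l * v 1 ^ l := mul_nonneg (by linarith) hvp.le
      calc a (1 + 1) l ≤ c l * v 1 ^ l * (α * γ) :=
            h1.trans (mul_le_mul_of_nonneg_left hsum hcvnn)
        _ = α * γ * ((1:ℝ) * c l * v 1 ^ l) * 1 := by ring
        _ ≤ α * γ * ((1:ℝ) * c l * v 1 ^ l) *
              ∏ i ∈ Finset.Icc 1 (l - 1), (1 + (1:ℝ) * c i * v 1 ^ i) :=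
            mul_le_mul_of_nonneg_left hP hXnn
    · -- inductive step: n = m + 1 with m ≥ 1
      intro l _ hl hlq
      obtain ⟨k, rfl⟩ : ∃ k, l = k + 1 := ⟨l - 1, by omega⟩
      simp only [Nat.add_sub_cancel]
      push_cast
      have hMe : m + 1 - k = m + 1 + 1 - (k + 1) := by omega
      rw [hMe]
      have hvm : 1 ≤ v m := hv1 m hm
      have hvm' : 1 ≤ v (m + 1) := hv1 (m + 1) (by omega)
      have hvmm : v m ≤ v (m + 1) := hvmono m (m + 1) hm (by omega)
      have hmn : (0:ℝ) ≤ (m:ℝ) := Nat.cast_nonneg m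
      have hγM : (0:ℝ) ≤ γ ^ max (m + 1 + 1 - (k + 1)) 1 := by positivity
      have hterm_nn : ∀ i, 1 ≤ i → i ≤ k → (0:ℝ) ≤ (m:ℝ) * c i * v m ^ i := by
        intro i h1i hik
        have hci : 1 ≤ c i := hc i h1i (by omega)
        have hvip : (0:ℝ) ≤ v m ^ i := by positivity
        exact mul_nonneg (mul_nonneg hmn (by linarith)) hvip
      have hP0 : (0:ℝ) ≤ ∏ i ∈ Finset.Icc 1 k, (1 + (m:ℝ) * c i * v m ^ i) := by
        apply Finset.prod_nonneg
        intro i hi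
        simp only [Finset.mem_Icc] at hi
        linarith [hterm_nn i hi.1 hi.2]
      have hPP' : ∏ i ∈ Finset.Icc 1 k, (1 + (m:ℝ) * c i * v m ^ i)
          ≤ ∏ i ∈ Finset.Icc 1 k, (1 + ((m:ℝ) + 1) * c i * v (m + 1) ^ i) := by
        apply Finset.prod_le_prod
        · intro i hi
          simp only [Finset.mem_Icc] at hi
          linarith [hterm_nn i hi.1 hi.2]
        · intro i hi
          simp only [Finset.mem_Icc] at hi
          have hci : 1 ≤ c i := hc i hi.1 (by omega)
          have hvip : (0:ℝ) ≤ v m ^ i := by positivity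
          have hvip' : (0:ℝ) ≤ v (m + 1) ^ i := by positivity
          have hpow : v m ^ i ≤ v (m + 1) ^ i :=
            pow_le_pow_left₀ (by linarith) hvmm i
          have h3 : (m:ℝ) * c i * v m ^ i ≤ (m:ℝ) * c i * v (m + 1) ^ i :=
            mul_le_mul_of_nonneg_left hpow (mul_nonneg hmn (by linarith))
          have h5 : (0:ℝ) ≤ c i * v (m + 1) ^ i := mul_nonneg (by linarith) hvip'
          nlinarith [h3, h5]
      have hc1 : 1 ≤ c (k + 1) := hc (k + 1) (by omega) hlq
      have hvp : (0:ℝ) ≤ v m ^ (k + 1) := by positivity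
      have hvp' : (0:ℝ) ≤ v (m + 1) ^ (k + 1) := by positivity
      -- bound on the sum
      have hsum : ∑ i ∈ Finset.range (k + 1), a (m + 1) i ≤
          α * γ ^ max (m + 1 + 1 - (k + 1)) 1 *
            ∏ i ∈ Finset.Icc 1 k, (1 + (m:ℝ) * c i * v m ^ i) := by
        rw [stmt18_tele (fun i => (m:ℝ) * c i * v m ^ i), mul_add, mul_one,
          Finset.mul_sum, Finset.sum_range_succ', add_comm]
        apply add_le_add
        · have h0 := hbase (m + 1) (by omega)
          have hE : γ ^ (m + 1) ≤ γ ^ max (m + 1 + 1 - (k + 1)) 1 :=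
            pow_le_pow_of_le_one hγle hγ1.le (by omega)
          calc a (m + 1) 0 ≤ α * γ ^ (m + 1) := h0
            _ ≤ α * γ ^ max (m + 1 + 1 - (k + 1)) 1 :=
              mul_le_mul_of_nonneg_left hE hα.le
        · apply Finset.sum_le_sum
          intro i hi
          simp only [Finset.mem_range] at hi
          have hIH := ih (i + 1) hm (by omega) (by omega)
          simp only [Nat.add_sub_cancel] at hIH
          have hE : γ ^ max (m + 1 - (i + 1)) 1 ≤ γ ^ max (m + 1 + 1 - (k + 1)) 1 :=
            pow_le_pow_of_le_one hγle hγ1.le (by omega)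
          have hvip : (0:ℝ) ≤ v m ^ (i + 1) := by positivity
          have hci : 1 ≤ c (i + 1) := hc (i + 1) (by omega) (by omega)
          have hXnn : (0:ℝ) ≤ (m:ℝ) * c (i + 1) * v m ^ (i + 1) :=
            mul_nonneg (mul_nonneg hmn (by linarith)) hvip
          have hQ0 : (0:ℝ) ≤ ∏ j ∈ Finset.Icc 1 i, (1 + (m:ℝ) * c j * v m ^ j) := by
            apply Finset.prod_nonneg
            intro j hj
            simp only [Finset.mem_Icc] at hj
            linarith [hterm_nn j hj.1 (by omega)]
          calc a (m + 1) (i + 1)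
              ≤ α * γ ^ max (m + 1 - (i + 1)) 1 * ((m:ℝ) * c (i + 1) * v m ^ (i + 1)) *
                ∏ j ∈ Finset.Icc 1 i, (1 + (m:ℝ) * c j * v m ^ j) := hIH
            _ ≤ α * γ ^ max (m + 1 + 1 - (k + 1)) 1 * ((m:ℝ) * c (i + 1) * v m ^ (i + 1)) *
                ∏ j ∈ Finset.Icc 1 i, (1 + (m:ℝ) * c j * v m ^ j) := by
                apply mul_le_mul_of_nonneg_right _ hQ0
                apply mul_le_mul_of_nonneg_right _ hXnn
                exact mul_le_mul_of_nonneg_left hE hα.le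
            _ = α * γ ^ max (m + 1 + 1 - (k + 1)) 1 *
                ((fun i => (m:ℝ) * c i * v m ^ i) (i + 1) *
                  ∏ j ∈ Finset.Icc 1 i, (1 + (m:ℝ) * c j * v m ^ j)) := by ring
      -- bound on γ * a (m+1) (k+1)
      have hIHl := ih (k + 1) hm hl hlq
      simp only [Nat.add_sub_cancel] at hIHl
      have hXnn : (0:ℝ) ≤ (m:ℝ) * c (k + 1) * v m ^ (k + 1) :=
        mul_nonneg (mul_nonneg hmn (by linarith)) hvp
      have hγstep : γ * a (m + 1) (k + 1) ≤
          α * γ ^ max (m + 1 + 1 - (k + 1)) 1 * ((m:ℝ) * c (k + 1) * v m ^ (k + 1)) *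
            ∏ i ∈ Finset.Icc 1 k, (1 + (m:ℝ) * c i * v m ^ i) := by
        have h1 : γ * a (m + 1) (k + 1) ≤
            γ * (α * γ ^ max (m + 1 - (k + 1)) 1 * ((m:ℝ) * c (k + 1) * v m ^ (k + 1)) *
              ∏ i ∈ Finset.Icc 1 k, (1 + (m:ℝ) * c i * v m ^ i)) :=
          mul_le_mul_of_nonneg_left hIHl hγle
        have h2 : γ ^ (max (m + 1 - (k + 1)) 1 + 1) ≤ γ ^ max (m + 1 + 1 - (k + 1)) 1 :=
          pow_le_pow_of_le_one hγle hγ1.le (by omega)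
        have hYnn : (0:ℝ) ≤ α * ((m:ℝ) * c (k + 1) * v m ^ (k + 1)) *
            ∏ i ∈ Finset.Icc 1 k, (1 + (m:ℝ) * c i * v m ^ i) :=
          mul_nonneg (mul_nonneg hα.le hXnn) hP0
        calc γ * a (m + 1) (k + 1)
            ≤ γ ^ (max (m + 1 - (k + 1)) 1 + 1) *
              (α * ((m:ℝ) * c (k + 1) * v m ^ (k + 1)) *
                ∏ i ∈ Finset.Icc 1 k, (1 + (m:ℝ) * c i * v m ^ i)) := by
              rw [pow_succ]; linarith [h1]
          _ ≤ γ ^ max (m + 1 + 1 - (k + 1)) 1 *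
              (α * ((m:ℝ) * c (k + 1) * v m ^ (k + 1)) *
                ∏ i ∈ Finset.Icc 1 k, (1 + (m:ℝ) * c i * v m ^ i)) :=
              mul_le_mul_of_nonneg_right h2 hYnn
          _ = α * γ ^ max (m + 1 + 1 - (k + 1)) 1 * ((m:ℝ) * c (k + 1) * v m ^ (k + 1)) *
              ∏ i ∈ Finset.Icc 1 k, (1 + (m:ℝ) * c i * v m ^ i) := by ring
      -- combine
      have hrec' := hrec (m + 1) (k + 1) (by omega) hl hlq
      have hcv : (0:ℝ) ≤ c (k + 1) * v (m + 1) ^ (k + 1) := mul_nonneg (by linarith) hvp'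
      have hpowv : v m ^ (k + 1) ≤ v (m + 1) ^ (k + 1) :=
        pow_le_pow_left₀ (by linarith) hvmm (k + 1)
      have hkey : (∏ i ∈ Finset.Icc 1 k, (1 + (m:ℝ) * c i * v m ^ i)) *
            ((m:ℝ) * v m ^ (k + 1) + v (m + 1) ^ (k + 1)) ≤
          (∏ i ∈ Finset.Icc 1 k, (1 + ((m:ℝ) + 1) * c i * v (m + 1) ^ i)) *
            (((m:ℝ) + 1) * v (m + 1) ^ (k + 1)) := by
        apply mul_le_mul hPP'
        · have h3 : (m:ℝ) * v m ^ (k + 1) ≤ (m:ℝ) * v (m + 1) ^ (k + 1) :=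
            mul_le_mul_of_nonneg_left hpowv hmn
          linarith
        · have h4 : (0:ℝ) ≤ (m:ℝ) * v m ^ (k + 1) := mul_nonneg hmn hvp
          linarith
        · linarith [hPP', hP0]
      calc a (m + 1 + 1) (k + 1)
          ≤ γ * a (m + 1) (k + 1) +
            c (k + 1) * v (m + 1) ^ (k + 1) * ∑ i ∈ Finset.range (k + 1), a (m + 1) i := hrec'
        _ ≤ α * γ ^ max (m + 1 + 1 - (k + 1)) 1 * ((m:ℝ) * c (k + 1) * v m ^ (k + 1)) *
              (∏ i ∈ Finset.Icc 1 k, (1 + (m:ℝ) * c i * v m ^ i)) +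
            c (k + 1) * v (m + 1) ^ (k + 1) *
              (α * γ ^ max (m + 1 + 1 - (k + 1)) 1 *
                ∏ i ∈ Finset.Icc 1 k, (1 + (m:ℝ) * c i * v m ^ i)) :=
          add_le_add hγstep (mul_le_mul_of_nonneg_left hsum hcv)
        _ = (α * γ ^ max (m + 1 + 1 - (k + 1)) 1 * c (k + 1)) *
              ((∏ i ∈ Finset.Icc 1 k, (1 + (m:ℝ) * c i * v m ^ i)) *
                ((m:ℝ) * v m ^ (k + 1) + v (m + 1) ^ (k + 1))) := by ring
        _ ≤ (α * γ ^ max (m + 1 + 1 - (k + 1)) 1 * c (k + 1)) *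
              ((∏ i ∈ Finset.Icc 1 k, (1 + ((m:ℝ) + 1) * c i * v (m + 1) ^ i)) *
                (((m:ℝ) + 1) * v (m + 1) ^ (k + 1))) := by
            apply mul_le_mul_of_nonneg_left hkey
            exact mul_nonneg (mul_nonneg hα.le hγM) (by linarith)
        _ = α * γ ^ max (m + 1 + 1 - (k + 1)) 1 * (((m:ℝ) + 1) * c (k + 1) * v (m + 1) ^ (k + 1)) *
              ∏ i ∈ Finset.Icc 1 k, (1 + ((m:ℝ) + 1) * c i * v (m + 1) ^ i) := by ring
end

section
/- Let σ = (σ_0,…,σ_n) be a time-homogeneous binary Markov chain as in the context, with one-step transition matrix Q having rows (1−p_{01}, p_{01}) and (p_{10}, 1−p_{10}) where p_{01}, p_{10} ∈ (0,1), and set r = 1 − p_{01} − p_{10}. For t = 1,…,n let ℓ_t : ℝ × {0,1} → ℝ be such that ε ↦ ℓ_t(ε,a) is differentiable for a = 0,1, with ℓ_t(0,1) = ℓ_t(0,0). Define d_t(ε) = ℓ_t(ε,1) − ℓ_t(ε,0), S_n(ε) = Σ_{t=1}^n ℓ_t(ε,σ_t), and λ_n(ε) = ln E[e^{S_n(ε)}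 | σ_0 = 1] − ln E[e^{S_n(ε)} | σ_0 = 0]. Then D_{0t} = r^t for every 1 ≤ t ≤ n, and λ_n'(0) = Σ_{t=1}^n r^t · d_t'(0). -/
noncomputable def TM (Q : Fin 2 → Fin 2 → ℝ) (h : ℕ → Fin 2 → ℝ) : ℕ → Fin 2 → Fin 2 → ℝ
  | 0 => fun a b => if a = b then 1 else 0
  | (n+1) => fun a b => (∑ c, TM Q h n a c * Q c b) * h (n+1) b

lemma TM_key (Q : Fin 2 → Fin 2 → ℝ) (h : ℕ → Fin 2 → ℝ) : ∀ (n : ℕ) (a b : Fin 2),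
    (∑ v : Fin (n+1) → Fin 2, if v 0 = a ∧ v (Fin.last n) = b then
      ∏ t : Fin n, Q (v t.castSucc) (v t.succ) * h (t.1+1) (v t.succ) else 0)
    = TM Q h n a b := by
  intro n
  induction n with
  | zero =>
    intro a b
    rw [Fintype.sum_equiv ((Fin.snocEquiv (fun _ : Fin 1 => Fin 2)).symm)
      _ (fun p => if p.1 = a ∧ p.1 = b then 1 else 0)]
    · simp only [TM, Fintype.sum_prod_type]
      fin_cases a <;> fin_cases b <;> simp
    · intro v
      simp [Fin.snocEquiv, Fin.last]
      rfl
  | succ n ih =>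
    intro a b
    rw [Fintype.sum_equiv ((Fin.snocEquiv (fun _ : Fin (n+2) => Fin 2)).symm)
      _ (fun p => if p.2 0 = a ∧ p.1 = b then
        (∏ t : Fin n, Q (p.2 t.castSucc) (p.2 t.succ) * h (t.1+1) (p.2 t.succ))
          * (Q (p.2 (Fin.last n)) p.1 * h (n+1) p.1) else 0)]
    · rw [Fintype.sum_prod_type, Finset.sum_comm]
      have step : ∀ y : Fin (n+1) → Fin 2,
          (∑ x : Fin 2, if y 0 = a ∧ x = b then
            (∏ t : Fin n, Q (y t.castSucc) (y t.succ) * h (t.1+1) (y t.succ)) *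
              (Q (y (Fin.last n)) x * h (n + 1) x) else 0)
          = ∑ c : Fin 2, (if y 0 = a ∧ y (Fin.last n) = c then
              (∏ t : Fin n, Q (y t.castSucc) (y t.succ) * h (t.1+1) (y t.succ)) else 0) *
              (Q c b * h (n + 1) b) := by
        intro y
        by_cases h1 : y 0 = a <;>
          simp [h1, Finset.sum_ite_eq', Finset.sum_ite_eq, mul_comm, mul_assoc, mul_left_comm]
      rw [Finset.sum_congr rfl (fun y _ => step y), Finset.sum_comm]
      simp only [← Finset.sum_mul, ih]
      show (∑ c : Fin 2, TM Q h n a c * (Q c b * h (n+1) b)) = TM Q h (n+1) a b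
      show _ = (∑ c, TM Q h n a c * Q c b) * h (n + 1) b
      rw [Finset.sum_mul]
      simp [mul_assoc]
    · intro v
      show (if v 0 = a ∧ v (Fin.last (n+1)) = b then
        ∏ t : Fin (n+1), Q (v t.castSucc) (v t.succ) * h (t.1+1) (v t.succ) else 0) = _
      rw [Fin.prod_univ_castSucc]
      simp [Fin.snocEquiv, Fin.init, Fin.succ_last]
      rfl

lemma TM_congr (Q : Fin 2 → Fin 2 → ℝ) (h h' : ℕ → Fin 2 → ℝ) :
    ∀ n : ℕ, (∀ s, 1 ≤ s → s ≤ n → h s = h' s) → TM Q h n = TM Q h' n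
  | 0, _ => rfl
  | (n+1), H => by
    funext a b
    show (∑ c, TM Q h n a c * Q c b) * h (n+1) b = (∑ c, TM Q h' n a c * Q c b) * h' (n+1) b
    rw [TM_congr Q h h' n (fun s h1 h2 => H s h1 (h2.trans (Nat.le_succ n))),
      H (n+1) (Nat.succ_le_succ (Nat.zero_le n)) le_rfl]

lemma TM_sum_succ (Q : Fin 2 → Fin 2 → ℝ) (hrow : ∀ a : Fin 2, Q a 0 + Q a 1 = 1)
    (h : ℕ → Fin 2 → ℝ) (k : ℕ) (hk : ∀ b, h (k+1) b = 1) (a : Fin 2) :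
    ∑ b, TM Q h (k+1) a b = ∑ b, TM Q h k a b := by
  show (∑ b, (∑ c, TM Q h k a c * Q c b) * h (k+1) b) = _
  simp only [hk, mul_one]
  rw [Finset.sum_comm]
  refine Finset.sum_congr rfl fun c _ => ?_
  rw [← Finset.mul_sum, Fin.sum_univ_two, hrow, mul_one]

lemma TM_sum_of_one (Q : Fin 2 → Fin 2 → ℝ) (hrow : ∀ a : Fin 2, Q a 0 + Q a 1 = 1)
    (h : ℕ → Fin 2 → ℝ) (m : ℕ) : ∀ n : ℕ, m ≤ n → (∀ s, m < s → ∀ b, h s b = 1) →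
    ∀ a, ∑ b, TM Q h n a b = ∑ b, TM Q h m a b := by
  intro n
  induction n with
  | zero => intro hm _ a; rw [Nat.le_zero.mp hm]
  | succ n ih =>
    intro hm hone a
    rcases Nat.lt_or_ge m (n+1) with hlt | hge
    · have h1 : m ≤ n := Nat.lt_succ_iff.mp hlt
      rw [TM_sum_succ Q hrow h n (hone (n+1) (Nat.lt_succ_of_le h1)) a, ih h1 hone a]
    · rw [Nat.le_antisymm hm hge]

lemma Qpow_rowsum (Q : Fin 2 → Fin 2 → ℝ) (hrow : ∀ a : Fin 2, Q a 0 + Q a 1 = 1)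
    (n : ℕ) (a : Fin 2) : ∑ b, TM Q (fun _ _ => 1) n a b = 1 := by
  rw [TM_sum_of_one Q hrow _ 0 n (Nat.zero_le n) (fun _ _ _ => rfl) a]
  show (∑ b : Fin 2, if a = b then (1:ℝ) else 0) = 1
  simp [Finset.sum_ite_eq]

lemma Qpow_diff (Q : Fin 2 → Fin 2 → ℝ) (hrow : ∀ a : Fin 2, Q a 0 + Q a 1 = 1) :
    ∀ n : ℕ, TM Q (fun _ _ => 1) n 1 1 - TM Q (fun _ _ => 1) n 0 1 = (Q 1 1 - Q 0 1)^n
  | 0 => by norm_num [TM]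
  | (n+1) => by
    have ih := Qpow_diff Q hrow n
    have e1 := Qpow_rowsum Q hrow n 1
    have e0 := Qpow_rowsum Q hrow n 0
    rw [Fin.sum_univ_two] at e1 e0
    show (∑ c, TM Q (fun _ _ => 1) n 1 c * Q c 1) * 1 -
      (∑ c, TM Q (fun _ _ => 1) n 0 c * Q c 1) * 1 = _
    rw [Fin.sum_univ_two, Fin.sum_univ_two]
    have h1 : TM Q (fun _ _ => 1) n 1 0 = 1 - TM Q (fun _ _ => 1) n 1 1 := by linarith
    have h2 : TM Q (fun _ _ => 1) n 0 0 = 1 - TM Q (fun _ _ => 1) n 0 1 := by linarith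
    rw [h1, h2, pow_succ, ← ih]
    ring

lemma sum_paths (Q : Fin 2 → Fin 2 → ℝ) (π : Fin 2 → ℝ) (h : ℕ → Fin 2 → ℝ) (n : ℕ) (a : Fin 2) :
    (∑ v : Fin (n+1) → Fin 2, if v 0 = a then
      pathWeight n π (fun _ => Q) v * ∏ t : Fin n, h (t.1+1) (v t.succ) else 0)
    = π a * ∑ b, TM Q h n a b := by
  have expand : ∀ v : Fin (n+1) → Fin 2,
      (if v 0 = a then pathWeight n π (fun _ => Q) v * ∏ t : Fin n, h (t.1+1) (v t.succ) else 0)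
      = ∑ b : Fin 2, (if v 0 = a ∧ v (Fin.last n) = b then
          π a * ∏ t : Fin n, (Q (v t.castSucc) (v t.succ) * h (t.1+1) (v t.succ)) else 0) := by
    intro v
    by_cases h1 : v 0 = a
    · simp only [h1, true_and, if_true]
      rw [Finset.sum_ite_eq Finset.univ (v (Fin.last n)), if_pos (Finset.mem_univ _)]
      rw [pathWeight, h1, Finset.prod_mul_distrib, mul_assoc]
    · simp [h1]
  rw [Finset.sum_congr rfl (fun v _ => expand v), Finset.sum_comm, Finset.mul_sum]
  refine Finset.sum_congr rfl fun b _ => ?_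
  rw [← TM_key Q h n a b, Finset.mul_sum]
  exact Finset.sum_congr rfl fun v _ => by rw [mul_ite, mul_zero]

lemma den_eq (Q : Fin 2 → Fin 2 → ℝ) (hrow : ∀ a : Fin 2, Q a 0 + Q a 1 = 1)
    (π : Fin 2 → ℝ) (n : ℕ) (a : Fin 2) :
    (∑ v : Fin (n+1) → Fin 2, if v 0 = a then pathWeight n π (fun _ => Q) v else 0) = π a := by
  have := sum_paths Q π (fun _ _ => 1) n a
  simp only [Finset.prod_const_one, mul_one] at this
  rw [this, Qpow_rowsum Q hrow n a, mul_one]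

lemma indsum (Q : Fin 2 → Fin 2 → ℝ) (hrow : ∀ a : Fin 2, Q a 0 + Q a 1 = 1)
    (π : Fin 2 → ℝ) (n : ℕ) (t : Fin n) (a : Fin 2) :
    (∑ v : Fin (n+1) → Fin 2, if v 0 = a then
      pathWeight n π (fun _ => Q) v * (if v t.succ = 1 then 1 else 0) else 0)
    = π a * TM Q (fun _ _ => 1) (t.1+1) a 1 := by
  set h : ℕ → Fin 2 → ℝ := fun s b => if s = t.1+1 then (if b = 1 then 1 else 0) else 1 with hh
  have hprod : ∀ v : Fin (n+1) → Fin 2,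
      (∏ s : Fin n, h (s.1+1) (v s.succ)) = (if v t.succ = 1 then 1 else 0) := by
    intro v
    have hterm : ∀ s : Fin n, h (s.1+1) (v s.succ)
        = if s = t then (if v s.succ = 1 then (1:ℝ) else 0) else 1 := by
      intro s
      by_cases hs : s = t
      · simp [hh, hs]
      · have : ¬ (s.1+1 = t.1+1) := fun hc => hs (Fin.ext (Nat.succ_injective hc))
        simp [hh, hs, this, Fin.val_inj]
    rw [Finset.prod_congr rfl (fun s _ => hterm s), Fintype.prod_ite_eq' t]
  rw [Finset.sum_congr rfl (fun v _ => by rw [← hprod v]), sum_paths Q π h n a]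
  congr 1
  have hone : ∀ s, t.1+1 < s → ∀ b, h s b = 1 := by
    intro s hs b
    have : s ≠ t.1+1 := by omega
    simp [hh, this]
  rw [TM_sum_of_one Q hrow h (t.1+1) n t.2 hone a]
  have hlow : TM Q h t.1 = TM Q (fun _ _ => 1) t.1 :=
    TM_congr Q h _ t.1 (fun s h1 h2 => by
      have : s ≠ t.1+1 := by omega
      funext b; simp [hh, this])
  show (∑ b : Fin 2, (∑ c, TM Q h t.1 a c * Q c b) * h (t.1+1) b) = _
  show _ = (∑ c, TM Q (fun _ _ => 1) t.1 a c * Q c 1) * (1:ℝ)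
  rw [hlow, Fin.sum_univ_two]
  have hb0 : h (t.1+1) 0 = 0 := by simp [hh]
  have hb1 : h (t.1+1) 1 = 1 := by simp [hh]
  rw [hb0, hb1, mul_zero, zero_add]

lemma condProb_eq (Q : Fin 2 → Fin 2 → ℝ) (hrow : ∀ a : Fin 2, Q a 0 + Q a 1 = 1)
    (π : Fin 2 → ℝ) (hπ : ∀ a, 0 < π a) (n : ℕ) (t : Fin n) (a : Fin 2) :
    condProb n π (fun _ => Q) 0 t.succ a 1 = TM Q (fun _ _ => 1) (t.1+1) a 1 := by
  unfold condProb condExp'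
  rw [den_eq Q hrow π n a]
  have : (∑ v : Fin (n+1) → Fin 2, if v 0 = a then
      pathWeight n π (fun _ => Q) v * (if v t.succ = 1 then 1 else 0) else 0)
      = π a * TM Q (fun _ _ => 1) (t.1+1) a 1 := indsum Q hrow π n t a
  rw [this, mul_div_cancel_left₀ _ (ne_of_gt (hπ a))]

/-- Let `σ = (σ₀,…,σ_n)` be a time-homogeneous binary Markov chain
with one-step transition matrix `Q` having rows `(1−p₀₁, p₀₁)`, `(p₁₀, 1−p₁₀)`,
`p₀₁, p₁₀ ∈ (0,1)`, and set `r = 1 − p₀₁ − p₁₀`.  For `t = 1,…,n` let `ℓ t (ε, a)` be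
differentiable in `ε` with `ℓ t (0,1) = ℓ t (0,0)`.  Then `D_{0t} = rᵗ` for
`1 ≤ t ≤ n`, and with
`λ_n(ε) = ln E[e^{S_n(ε)} | σ₀ = 1] − ln E[e^{S_n(ε)} | σ₀ = 0]` where
`S_n(ε) = ∑_{t=1}^n ℓ_t(ε, σ_t)`, the function `λ_n` is differentiable at `0` with
`λ_n'(0) = ∑_{t=1}^n rᵗ d_t'(0)`. -/
theorem stmt19 (n : ℕ) (p01 p10 : ℝ)
    (h01 : p01 ∈ Set.Ioo (0 : ℝ) 1) (h10 : p10 ∈ Set.Ioo (0 : ℝ) 1)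
    (π : Fin 2 → ℝ) (hπ : ∀ a, 0 < π a) (hπsum : π 0 + π 1 = 1)
    (ℓ : ℕ → ℝ → Fin 2 → ℝ)
    (hdiff : ∀ t ∈ Finset.Icc 1 n, ∀ a, Differentiable ℝ fun ε => ℓ t ε a)
    (h0 : ∀ t ∈ Finset.Icc 1 n, ℓ t 0 1 = ℓ t 0 0) :
    (∀ t : Fin n,
      condProb n π (fun _ => ![![1 - p01, p01], ![p10, 1 - p10]]) 0 t.succ 1 1 -
          condProb n π (fun _ => ![![1 - p01, p01], ![p10, 1 - p10]]) 0 t.succ 0 1 =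
        (1 - p01 - p10) ^ (t.1 + 1)) ∧
    HasDerivAt (fun ε =>
        Real.log (condExp' n π (fun _ => ![![1 - p01, p01], ![p10, 1 - p10]]) 0 1
          fun v => Real.exp (∑ t : Fin n, ℓ (t.1 + 1) ε (v t.succ))) -
        Real.log (condExp' n π (fun _ => ![![1 - p01, p01], ![p10, 1 - p10]]) 0 0
          fun v => Real.exp (∑ t : Fin n, ℓ (t.1 + 1) ε (v t.succ))))
      (∑ t : Fin n, (1 - p01 - p10) ^ (t.1 + 1) *
        deriv (fun ε => ℓ (t.1 + 1) ε 1 - ℓ (t.1 + 1) ε 0) 0) 0 := by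
  set M : Fin 2 → Fin 2 → ℝ := ![![1 - p01, p01], ![p10, 1 - p10]] with hM
  have hrow : ∀ a : Fin 2, M a 0 + M a 1 = 1 := by
    intro a; fin_cases a <;> simp [hM] <;> try ring
  have hdiffM : M 1 1 - M 0 1 = 1 - p01 - p10 := by simp [hM]; ring
  have hπ0 : ∀ a, π a ≠ 0 := fun a => ne_of_gt (hπ a)
  have hmem : ∀ t : Fin n, (t.1+1) ∈ Finset.Icc 1 n :=
    fun t => Finset.mem_Icc.mpr ⟨Nat.le_add_left 1 t.1, t.2⟩
  constructor
  · intro t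
    rw [condProb_eq M hrow π hπ n t 1, condProb_eq M hrow π hπ n t 0,
      Qpow_diff M hrow (t.1+1), hdiffM]
  · set g : ℕ → Fin 2 → ℝ := fun s b => deriv (fun ε => ℓ s ε b) 0 with hg
    set w : Fin 2 → (Fin (n+1) → Fin 2) → ℝ :=
      fun a v => if v 0 = a then pathWeight n π (fun _ => M) v else 0 with hw
    set N : Fin 2 → ℝ → ℝ := fun a ε => ∑ v : Fin (n+1) → Fin 2,
      w a v * Real.exp (∑ t : Fin n, ℓ (t.1+1) ε (v t.succ)) with hN
    set E : ℝ := Real.exp (∑ t : Fin n, ℓ (t.1+1) 0 0) with hE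
    set K : Fin 2 → ℝ := fun a => ∑ t : Fin n,
      (g (t.1+1) 0 + (g (t.1+1) 1 - g (t.1+1) 0) * TM M (fun _ _ => 1) (t.1+1) a 1) with hK
    have hSv0 : ∀ v : Fin (n+1) → Fin 2,
        (∑ t : Fin n, ℓ (t.1+1) 0 (v t.succ)) = ∑ t : Fin n, ℓ (t.1+1) 0 0 := by
      intro v
      refine Finset.sum_congr rfl fun t _ => ?_
      have hb : ∀ b : Fin 2, ℓ (t.1+1) 0 b = ℓ (t.1+1) 0 0 := by
        intro b; fin_cases b
        · rfl
        · exact h0 _ (hmem t)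
      exact hb _
    have hEpos : (0:ℝ) < E := Real.exp_pos _
    have hwsum : ∀ a, ∑ v, w a v = π a := fun a => den_eq M hrow π n a
    have hNval : ∀ a, N a 0 = E * π a := by
      intro a
      show (∑ v : Fin (n+1) → Fin 2, w a v * Real.exp (∑ t : Fin n, ℓ (t.1+1) 0 (v t.succ))) = _
      rw [Finset.sum_congr rfl (fun v _ => by rw [hSv0 v]), ← Finset.sum_mul, hwsum a, ← hE,
        mul_comm]
    have hNne : ∀ a, N a 0 ≠ 0 := fun a => by
      rw [hNval a]; exact ne_of_gt (mul_pos hEpos (hπ a))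
    have hTsum : ∀ (t : Fin n) (a : Fin 2), (∑ v : Fin (n+1) → Fin 2, w a v * g (t.1+1) (v t.succ))
        = π a * g (t.1+1) 0 +
          (g (t.1+1) 1 - g (t.1+1) 0) * (π a * TM M (fun _ _ => 1) (t.1+1) a 1) := by
      intro t a
      have gsplit : ∀ b : Fin 2, g (t.1+1) b
          = g (t.1+1) 0 + (if b = 1 then (1:ℝ) else 0) * (g (t.1+1) 1 - g (t.1+1) 0) := by
        intro b; fin_cases b
        · norm_num
        · norm_num
      have key : ∀ v : Fin (n+1) → Fin 2, w a v * g (t.1+1) (v t.succ)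
          = w a v * g (t.1+1) 0 +
            (if v 0 = a then pathWeight n π (fun _ => M) v * (if v t.succ = 1 then 1 else 0)
              else 0) * (g (t.1+1) 1 - g (t.1+1) 0) := by
        intro v
        rw [gsplit (v t.succ), hw]
        by_cases h1 : v 0 = a <;> by_cases h2 : v t.succ = 1 <;> simp [h1, h2] <;> ring
      rw [Finset.sum_congr rfl (fun v _ => key v), Finset.sum_add_distrib, ← Finset.sum_mul,
        ← Finset.sum_mul, hwsum a, indsum M hrow π n t a]
      ring
    have hDer : ∀ a : Fin 2, HasDerivAt (N a) (E * (π a * K a)) 0 := by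
      intro a
      have hstep : ∀ v : Fin (n+1) → Fin 2,
          HasDerivAt (fun ε => w a v * Real.exp (∑ t : Fin n, ℓ (t.1+1) ε (v t.succ)))
            (w a v * (E * ∑ t : Fin n, g (t.1+1) (v t.succ))) 0 := by
        intro v
        have hsd : HasDerivAt (fun ε => ∑ t : Fin n, ℓ (t.1+1) ε (v t.succ))
            (∑ t : Fin n, g (t.1+1) (v t.succ)) 0 :=
          HasDerivAt.fun_sum fun t _ => (hdiff (t.1+1) (hmem t) (v t.succ) 0).hasDerivAt
        have h2 := hsd.exp.const_mul (w a v)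
        have h3 : Real.exp (∑ t : Fin n, ℓ (t.1+1) 0 (v t.succ)) = E := by rw [hSv0 v, hE]
        rw [h3] at h2
        exact h2
      have h4 := HasDerivAt.fun_sum (fun v (_ : v ∈ Finset.univ) => hstep v)
      have e1 : ∀ v : Fin (n+1) → Fin 2, w a v * (E * ∑ t : Fin n, g (t.1+1) (v t.succ))
          = E * ∑ t : Fin n, w a v * g (t.1+1) (v t.succ) := by
        intro v
        simp only [Finset.mul_sum]
        exact Finset.sum_congr rfl fun t _ => by ring
      have h5 : (∑ v : Fin (n+1) → Fin 2, w a v * (E * ∑ t : Fin n, g (t.1+1) (v t.succ)))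
          = E * (π a * K a) := by
        rw [Finset.sum_congr rfl (fun v _ => e1 v), ← Finset.mul_sum, Finset.sum_comm,
          Finset.sum_congr rfl (fun t _ => hTsum t a), hK]
        simp only
        congr 1
        rw [Finset.mul_sum]
        exact Finset.sum_congr rfl fun t _ => by ring
      rw [← h5]
      exact h4
    have hlog : ∀ a : Fin 2, HasDerivAt (fun ε => Real.log (N a ε / π a)) (K a) 0 := by
      intro a
      have h6 := ((hDer a).div_const (π a)).log (div_ne_zero (hNne a) (hπ0 a))
      have h7 : E * (π a * K a) / π a / (N a 0 / π a) = K a := by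
        rw [hNval a]
        field_simp [hπ0 a, ne_of_gt hEpos]
      rwa [h7] at h6
    have hfinal := (hlog 1).sub (hlog 0)
    have hnum : ∀ (a : Fin 2) (ε : ℝ), condExp' n π (fun _ => M) 0 a
        (fun v => Real.exp (∑ t : Fin n, ℓ (t.1+1) ε (v t.succ))) = N a ε / π a := by
      intro a ε
      unfold condExp'
      rw [den_eq M hrow π n a]
      congr 1
      show _ = ∑ v : Fin (n+1) → Fin 2, w a v * Real.exp (∑ t : Fin n, ℓ (t.1+1) ε (v t.succ))
      refine Finset.sum_congr rfl fun v _ => ?_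
      rw [hw]
      simp only
      rw [ite_mul, zero_mul]
    have hfun : (fun ε =>
        Real.log (condExp' n π (fun _ => M) 0 1
          fun v => Real.exp (∑ t : Fin n, ℓ (t.1 + 1) ε (v t.succ))) -
        Real.log (condExp' n π (fun _ => M) 0 0
          fun v => Real.exp (∑ t : Fin n, ℓ (t.1 + 1) ε (v t.succ))))
        = fun ε => Real.log (N 1 ε / π 1) - Real.log (N 0 ε / π 0) := by
      funext ε
      rw [hnum 1 ε, hnum 0 ε]
    rw [hfun]
    have hdsub : ∀ t : Fin n, deriv (fun ε => ℓ (t.1+1) ε 1 - ℓ (t.1+1) ε 0) 0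
        = g (t.1+1) 1 - g (t.1+1) 0 := fun t =>
      (((hdiff _ (hmem t) 1) 0).hasDerivAt.sub ((hdiff _ (hmem t) 0) 0).hasDerivAt).deriv
    have hval : (∑ t : Fin n, (1 - p01 - p10) ^ (t.1 + 1) *
        deriv (fun ε => ℓ (t.1 + 1) ε 1 - ℓ (t.1 + 1) ε 0) 0) = K 1 - K 0 := by
      rw [hK]
      simp only
      rw [← Finset.sum_sub_distrib]
      refine Finset.sum_congr rfl fun t _ => ?_
      rw [hdsub t]
      have := Qpow_diff M hrow (t.1+1)
      rw [hdiffM] at this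
      rw [← this]
      ring
    rw [hval]
    exact hfinal
end
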